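/- Let H be an (n-2)-uniform clutter on n vertices whose edge ideal I(H) satisfies I(H)^(k) = I(H)^k for some integer k ≥ 2. Then I(H)^(k) = I(H)^k for all integers k ≥ 1. -/

import Mathlib

open MvPolynomial

noncomputable def symbPow {R : Type*} [CommRing R] (I : Ideal R) (k : ℕ) : Ideal R :=
  ⨅ p ∈ I.minimalPrimes, p ^ k

/-- The edge ideal of a clutter with edge set `E` on vertex set `Fin n`. -/
noncomputable def clutterIdeal {n : ℕ} (K : Type*) [Field K] (E : Set (Finset (Fin n))) :
    Ideal (MvPolynomial (Fin n) K) :=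
  Ideal.span {m | ∃ e ∈ E, m = ∏ i ∈ e, X i}

open Pointwise

namespace Stmt16Aux

variable {n : ℕ} {K : Type*} [Field K]

/-- indicator finsupp of a finset -/
noncomputable def ind (e : Finset (Fin n)) : Fin n →₀ ℕ := ∑ i ∈ e, Finsupp.single i 1

lemma ind_apply (e : Finset (Fin n)) (v : Fin n) : ind e v = if v ∈ e then 1 else 0 := by
  classical
  rw [ind, Finsupp.finset_sum_apply]
  simp only [Finsupp.single_apply]
  rw [Finset.sum_ite_eq' e v (fun _ => 1)]

lemma prod_X_eq_monomial_ind (e : Finset (Fin n)) :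
    (∏ i ∈ e, X i : MvPolynomial (Fin n) K) = monomial (ind e) 1 := by
  classical
  induction e using Finset.induction with
  | empty => simp [ind]
  | insert a s hx ih =>
    rw [Finset.prod_insert hx, ih]
    have : ind (insert a s) = Finsupp.single a 1 + ind s := by
      rw [ind, ind, Finset.sum_insert hx]
    rw [this, monomial_single_add, pow_one]

/-- the prime ideal generated by the variables in C -/
noncomputable def PC (K : Type*) [Field K] {n : ℕ} (C : Finset (Fin n)) : Ideal (MvPolynomial (Fin n) K) :=
  Ideal.span (X '' (C : Set (Fin n)))

/-- the killing homomorphism -/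
noncomputable def kil (K : Type*) [Field K] {n : ℕ} (C : Finset (Fin n)) :
    MvPolynomial (Fin n) K →ₐ[K] MvPolynomial (Fin n) K :=
  aeval (fun i => if i ∈ C then 0 else X i)

lemma sub_kil_mem (C : Finset (Fin n)) (f : MvPolynomial (Fin n) K) :
    f - kil K C f ∈ PC K C := by
  classical
  induction f using MvPolynomial.induction_on with
  | C a => simp [kil, PC]
  | add p q hp hq =>
    have : p + q - kil K C (p + q) = (p - kil K C p) + (q - kil K C q) := by
      rw [map_add]; ring
    rw [this]; exact Ideal.add_mem _ hp hq
  | mul_X p i hp =>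
    rw [map_mul, kil, aeval_X, ← kil]
    by_cases hi : i ∈ C
    · rw [if_pos hi, mul_zero, sub_zero]
      have hXi : X i ∈ PC K C := Ideal.subset_span ⟨i, hi, rfl⟩
      exact Ideal.mul_mem_left _ p hXi
    · rw [if_neg hi]
      have : p * X i - kil K C p * X i = (p - kil K C p) * X i := by ring
      rw [this]
      exact Ideal.mul_mem_right _ _ hp

lemma PC_le_ker (C : Finset (Fin n)) : PC K C ≤ RingHom.ker (kil K C).toRingHom := by
  rw [PC, Ideal.span_le]
  rintro x ⟨i, hi, rfl⟩
  simp only [SetLike.mem_coe, RingHom.mem_ker, AlgHom.toRingHom_eq_coe, RingHom.coe_coe]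
  have hi' : i ∈ C := hi
  rw [kil, aeval_X, if_pos hi']

lemma PC_eq_ker (C : Finset (Fin n)) : PC K C = RingHom.ker (kil K C).toRingHom := by
  refine le_antisymm (PC_le_ker C) ?_
  intro f hf
  rw [RingHom.mem_ker] at hf
  have h2 := sub_kil_mem (K := K) C f
  simp only [AlgHom.toRingHom_eq_coe, RingHom.coe_coe] at hf
  rw [hf, sub_zero] at h2
  exact h2

lemma PC_isPrime (C : Finset (Fin n)) : (PC K C).IsPrime := by
  rw [PC_eq_ker]
  exact RingHom.ker_isPrime _

lemma X_mem_PC_iff {C : Finset (Fin n)} {i : Fin n} : (X i : MvPolynomial (Fin n) K) ∈ PC K C ↔ i ∈ C := by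
  constructor
  · intro hmem
    rw [PC_eq_ker, RingHom.mem_ker] at hmem
    simp only [AlgHom.toRingHom_eq_coe, RingHom.coe_coe, kil, aeval_X] at hmem
    by_contra hi
    rw [if_neg hi] at hmem
    exact X_ne_zero i hmem
  · intro hi
    exact Ideal.subset_span ⟨i, hi, rfl⟩

/-- the span of a set of monomials -/
noncomputable def monSpan (K : Type*) [Field K] {n : ℕ} (A : Set (Fin n →₀ ℕ)) :
    Ideal (MvPolynomial (Fin n) K) :=
  Ideal.span ((fun d => monomial d (1 : K)) '' A)

lemma monSpan_mul (A B : Set (Fin n →₀ ℕ)) :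
    monSpan K A * monSpan K B = monSpan K (A + B) := by
  rw [monSpan, monSpan, monSpan, Ideal.span_mul_span']
  congr 1
  ext x
  constructor
  · rintro ⟨_, ⟨a, ha, rfl⟩, _, ⟨b, hb, rfl⟩, rfl⟩
    exact ⟨a + b, Set.add_mem_add ha hb, by simp [monomial_mul]⟩
  · rintro ⟨_, ⟨a, ha, b, hb, rfl⟩, rfl⟩
    exact ⟨monomial a 1, ⟨a, ha, rfl⟩, monomial b 1, ⟨b, hb, rfl⟩, by simp [monomial_mul]⟩

lemma monSpan_mono {A B : Set (Fin n →₀ ℕ)} (h : A ⊆ B) : monSpan K A ≤ monSpan K B :=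
  Ideal.span_mono (Set.image_mono h)

lemma mem_monSpan_iff {A : Set (Fin n →₀ ℕ)} {f : MvPolynomial (Fin n) K} :
    f ∈ monSpan K A ↔ ∀ m ∈ f.support, ∃ d ∈ A, d ≤ m :=
  mem_ideal_span_monomial_image

/-- the set of exponents of products of k generators -/
def Dk (E : Set (Finset (Fin n))) : ℕ → Set (Fin n →₀ ℕ)
  | 0 => {0}
  | (k+1) => {d | ∃ d' ∈ Dk E k, ∃ e ∈ E, d = d' + ind e}

lemma clutterIdeal_eq (E : Set (Finset (Fin n))) :
    clutterIdeal K E = monSpan K (Dk E 1) := by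
  rw [clutterIdeal, monSpan]
  congr 1
  ext x
  constructor
  · rintro ⟨e, he, rfl⟩
    exact ⟨ind e, ⟨0, rfl, e, he, (zero_add _).symm⟩, (prod_X_eq_monomial_ind e).symm⟩
  · rintro ⟨d, ⟨d', hd', e, he, rfl⟩, rfl⟩
    have : d' = 0 := hd'
    subst this
    exact ⟨e, he, by rw [prod_X_eq_monomial_ind, zero_add]⟩

lemma clutterIdeal_pow (E : Set (Finset (Fin n))) (k : ℕ) :
    clutterIdeal K E ^ k = monSpan K (Dk E k) := by
  induction k with
  | zero =>
    rw [pow_zero, Ideal.one_eq_top]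
    symm
    rw [Ideal.eq_top_iff_one]
    exact Ideal.subset_span ⟨0, rfl, by simp⟩
  | succ k ih =>
    rw [pow_succ, ih, clutterIdeal_eq, monSpan_mul]
    congr 1
    ext d
    constructor
    · rintro ⟨d1, hd1, d2, ⟨z, hz, e, he, rfl⟩, rfl⟩
      have : z = 0 := hz
      subst this
      exact ⟨d1, hd1, e, he, by rw [zero_add]⟩
    · rintro ⟨d', hd', e, he, rfl⟩
      exact ⟨d', hd', ind e, ⟨0, rfl, e, he, (zero_add _).symm⟩, rfl⟩

lemma Dk_add {E : Set (Finset (Fin n))} {k1 k2 : ℕ} {d1 d2 : Fin n →₀ ℕ}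
    (h1 : d1 ∈ Dk E k1) (h2 : d2 ∈ Dk E k2) : d1 + d2 ∈ Dk E (k1 + k2) := by
  induction k2 generalizing d2 with
  | zero => have : d2 = 0 := h2; subst this; simpa using h1
  | succ k ih =>
    obtain ⟨d', hd', e, he, rfl⟩ := h2
    exact ⟨d1 + d', ih hd', e, he, by rw [add_assoc]⟩

lemma smul_ind_mem_Dk {E : Set (Finset (Fin n))} {e : Finset (Fin n)} (he : e ∈ E) (q : ℕ) :
    q • ind e ∈ Dk E q := by
  induction q with
  | zero => simp [Dk]
  | succ q ih => exact ⟨q • ind e, ih, e, he, by rw [succ_nsmul]⟩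

/-- C is a vertex cover of the clutter E -/
def Cover (E : Set (Finset (Fin n))) (C : Finset (Fin n)) : Prop :=
  ∀ e ∈ E, ∃ x ∈ C, x ∈ e

def MinCover (E : Set (Finset (Fin n))) (C : Finset (Fin n)) : Prop :=
  Cover E C ∧ ∀ C' ⊆ C, Cover E C' → C' = C

lemma prime_prod_X_mem {p : Ideal (MvPolynomial (Fin n) K)} (hp : p.IsPrime)
    (e : Finset (Fin n)) (hmem : (∏ i ∈ e, X i : MvPolynomial (Fin n) K) ∈ p) :
    ∃ i ∈ e, (X i : MvPolynomial (Fin n) K) ∈ p := by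
  classical
  induction e using Finset.induction with
  | empty =>
    simp only [Finset.prod_empty] at hmem
    exact absurd (p.eq_top_of_isUnit_mem hmem isUnit_one) hp.ne_top
  | insert a s hx ih =>
    rw [Finset.prod_insert hx] at hmem
    rcases hp.mem_or_mem hmem with h | h
    · exact ⟨a, Finset.mem_insert_self a s, h⟩
    · obtain ⟨i, hi, hXi⟩ := ih h
      exact ⟨i, Finset.mem_insert_of_mem hi, hXi⟩

lemma clutterIdeal_le_PC {E : Set (Finset (Fin n))} {C : Finset (Fin n)} (h : Cover E C) :
    clutterIdeal K E ≤ PC K C := by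
  rw [clutterIdeal, Ideal.span_le]
  rintro x ⟨e, he, rfl⟩
  obtain ⟨i, hiC, hie⟩ := h e he
  have : (∏ j ∈ e, X j : MvPolynomial (Fin n) K) = X i * ∏ j ∈ e.erase i, X j := by
    rw [← Finset.prod_erase_mul e _ hie]; ring
  rw [SetLike.mem_coe, this]
  exact Ideal.mul_mem_right _ _ (X_mem_PC_iff.mpr hiC)

/-- every minimal prime of the clutter ideal contains `P_C` for some cover C -/
lemma exists_cover_of_minimalPrime {E : Set (Finset (Fin n))}
    {p : Ideal (MvPolynomial (Fin n) K)} (hp : p ∈ (clutterIdeal K E).minimalPrimes) :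
    ∃ C : Finset (Fin n), Cover E C ∧ PC K C ≤ p := by
  classical
  obtain ⟨⟨hprime, hle⟩, _⟩ := hp
  refine ⟨Finset.univ.filter (fun i => X i ∈ p), ?_, ?_⟩
  · intro e he
    have : (∏ i ∈ e, X i : MvPolynomial (Fin n) K) ∈ p := by
      apply hle; exact Ideal.subset_span ⟨e, he, rfl⟩
    obtain ⟨i, hie, hXi⟩ := prime_prod_X_mem hprime e this
    exact ⟨i, Finset.mem_filter.mpr ⟨Finset.mem_univ i, hXi⟩, hie⟩
  · rw [PC, Ideal.span_le]
    rintro x ⟨i, hi, rfl⟩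
    simp only [Finset.coe_filter, Set.mem_setOf_eq] at hi
    exact hi.2

/-- minimal covers give minimal primes -/
lemma minCover_mem_minimalPrimes {E : Set (Finset (Fin n))} {C : Finset (Fin n)}
    (h : MinCover E C) : PC K C ∈ (clutterIdeal K E).minimalPrimes := by
  classical
  refine ⟨⟨PC_isPrime C, clutterIdeal_le_PC h.1⟩, ?_⟩
  rintro q ⟨hq, hleq⟩ hqle
  -- q prime, I ≤ q, q ≤ PC C ; show PC C ≤ q
  set C' : Finset (Fin n) := C.filter (fun i => X i ∈ q) with hC'
  have hsub : C' ⊆ C := Finset.filter_subset _ _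
  have hcov : Cover E C' := by
    intro e he
    have : (∏ i ∈ e, X i : MvPolynomial (Fin n) K) ∈ q := by
      apply hleq; exact Ideal.subset_span ⟨e, he, rfl⟩
    obtain ⟨i, hie, hXi⟩ := prime_prod_X_mem hq e this
    have hiC : i ∈ C := X_mem_PC_iff.mp (hqle hXi)
    exact ⟨i, Finset.mem_filter.mpr ⟨hiC, hXi⟩, hie⟩
  have : C' = C := h.2 C' hsub hcov
  rw [PC, Ideal.span_le]
  rintro x ⟨i, hi, rfl⟩
  have : i ∈ C' := by rw [this]; exact hi
  exact (Finset.mem_filter.mp this).2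

/-- monomials whose exponent on a set C with total at least k -/
lemma monomial_mem_PC_pow {C : Finset (Fin n)} {k : ℕ} {a : Fin n →₀ ℕ}
    (h : k ≤ ∑ i ∈ C, a i) : (monomial a 1 : MvPolynomial (Fin n) K) ∈ PC K C ^ k := by
  classical
  induction k generalizing a with
  | zero => simp
  | succ k ih =>
    have hpos : 0 < ∑ i ∈ C, a i := lt_of_lt_of_le (Nat.succ_pos k) h
    obtain ⟨i, hiC, hia⟩ : ∃ i ∈ C, 0 < a i := by
      by_contra hc
      push_neg at hc
      have : ∑ i ∈ C, a i = 0 := Finset.sum_eq_zero (fun i hi => Nat.le_zero.mp (hc i hi))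
      omega
    set b : Fin n →₀ ℕ := a - Finsupp.single i 1 with hb
    have hbapp : ∀ j, b j = a j - (Finsupp.single i 1) j := fun j => Finsupp.tsub_apply _ _ j
    have hba : Finsupp.single i 1 + b = a := by
      ext j
      rw [Finsupp.add_apply, hbapp j, Finsupp.single_apply]
      by_cases hj : i = j
      · subst hj; simp; omega
      · simp [hj]
    have hsum : k ≤ ∑ j ∈ C, b j := by
      have h1 : ∑ j ∈ C, b j + 1 = ∑ j ∈ C, a j := by
        rw [← Finset.add_sum_erase _ b hiC, ← Finset.add_sum_erase _ a hiC]
        have : ∑ j ∈ C.erase i, b j = ∑ j ∈ C.erase i, a j := by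
          apply Finset.sum_congr rfl
          intro j hj
          have hji : j ≠ i := Finset.ne_of_mem_erase hj
          rw [hbapp j, Finsupp.single_apply, if_neg (fun hh => hji hh.symm)]
          omega
        rw [this]
        have : b i = a i - 1 := by rw [hbapp i, Finsupp.single_apply, if_pos rfl]
        omega
      omega
    have : (monomial a 1 : MvPolynomial (Fin n) K) = X i * monomial b 1 := by
      rw [← hba, monomial_single_add, pow_one]
    rw [this, pow_succ']
    exact Ideal.mul_mem_mul (Ideal.subset_span ⟨i, hiC, rfl⟩) (ih hsum)

lemma PC_pow_le_monSpan (C : Finset (Fin n)) (k : ℕ) :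
    PC K C ^ k ≤ monSpan K {d | k ≤ ∑ i ∈ C, d i} := by
  induction k with
  | zero =>
    rw [pow_zero, Ideal.one_eq_top]
    intro f _
    rw [mem_monSpan_iff]
    intro m _
    exact ⟨0, by simp, zero_le⟩
  | succ k ih =>
    rw [pow_succ]
    have hPC1 : PC K C ≤ monSpan K {d | 1 ≤ ∑ i ∈ C, d i} := by
      rw [PC, Ideal.span_le]
      rintro x ⟨i, hi, rfl⟩
      have hiC : i ∈ C := hi
      apply Ideal.subset_span
      refine ⟨Finsupp.single i 1, ?_, ?_⟩
      swap
      · rw [X]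
      simp only [Set.mem_setOf_eq]
      calc (1:ℕ) = ∑ j ∈ {i}, Finsupp.single i 1 j := by simp
      _ ≤ ∑ j ∈ C, Finsupp.single i 1 j := by
          apply Finset.sum_le_sum_of_subset
          simpa using hiC
    refine le_trans (Ideal.mul_mono ih hPC1) ?_
    rw [monSpan_mul]
    apply monSpan_mono
    rintro x ⟨d1, hd1, d2, hd2, rfl⟩
    simp only [Set.mem_setOf_eq] at *
    calc k + 1 ≤ (∑ i ∈ C, d1 i) + (∑ i ∈ C, d2 i) := Nat.add_le_add hd1 hd2
    _ = ∑ i ∈ C, (d1 i + d2 i) := (Finset.sum_add_distrib).symm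
    _ = ∑ i ∈ C, (d1 + d2) i := by
        apply Finset.sum_congr rfl; intros; rw [Finsupp.add_apply]

lemma support_sum_of_mem_PC_pow {C : Finset (Fin n)} {k : ℕ} {f : MvPolynomial (Fin n) K}
    (hf : f ∈ PC K C ^ k) {m : Fin n →₀ ℕ} (hm : m ∈ f.support) : k ≤ ∑ i ∈ C, m i := by
  have := PC_pow_le_monSpan (K := K) C k hf
  rw [mem_monSpan_iff] at this
  obtain ⟨d, hd, hdm⟩ := this m hm
  calc k ≤ ∑ i ∈ C, d i := hd
  _ ≤ ∑ i ∈ C, m i := Finset.sum_le_sum (fun i _ => hdm i)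

lemma Dk_count {E : Set (Finset (Fin n))} (T : Finset (Fin n)) (β : ℕ)
    (hT : ∀ e ∈ E, (T \ e).card ≤ β) {k : ℕ} {d : Fin n →₀ ℕ} (hd : d ∈ Dk E k) :
    k * (T.card - β) ≤ ∑ v ∈ T, d v := by
  classical
  induction k generalizing d with
  | zero => simp
  | succ k ih =>
    obtain ⟨d', hd', e, he, rfl⟩ := hd
    have h1 : ∑ v ∈ T, ind e v = (T ∩ e).card := by
      rw [Finset.card_eq_sum_ones, ← Finset.sum_filter_add_sum_filter_not T (fun v => v ∈ e)]
      have : Finset.filter (fun v => v ∈ e) T = T ∩ e := by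
        ext x; simp [Finset.mem_inter, Finset.mem_filter]
      rw [← this]
      have hz : ∑ v ∈ Finset.filter (fun v => ¬ v ∈ e) T, ind e v = 0 := by
        apply Finset.sum_eq_zero
        intro v hv
        rw [ind_apply, if_neg (Finset.mem_filter.mp hv).2]
      rw [hz, add_zero]
      apply Finset.sum_congr rfl
      intro v hv
      rw [ind_apply, if_pos (Finset.mem_filter.mp hv).2]
    have h2 : T.card - β ≤ (T ∩ e).card := by
      have := Finset.card_sdiff_add_card_inter T e
      have := hT e he
      omega
    have h3 : ∑ v ∈ T, (d' + ind e) v = ∑ v ∈ T, d' v + ∑ v ∈ T, ind e v := by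
      rw [← Finset.sum_add_distrib]
      apply Finset.sum_congr rfl
      intros; rw [Finsupp.add_apply]
    have h4 := ih hd'
    rw [h3, h1]
    have : (k+1) * (T.card - β) = k * (T.card - β) + (T.card - β) := by ring
    omega

lemma bad_master (E : Set (Finset (Fin n))) (a : Fin n →₀ ℕ) (k : ℕ)
    (T : Finset (Fin n)) (β : ℕ)
    (hcov : ∀ C : Finset (Fin n), Cover E C → k ≤ ∑ i ∈ C, a i)
    (hT : ∀ e ∈ E, (T \ e).card ≤ β)
    (hsum : ∑ v ∈ T, a v < k * (T.card - β)) :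
    symbPow (clutterIdeal K E) k ≠ clutterIdeal K E ^ k := by
  intro heq
  have hmem : (monomial a 1 : MvPolynomial (Fin n) K) ∈ symbPow (clutterIdeal K E) k := by
    rw [symbPow]
    rw [Ideal.mem_iInf]
    intro p
    rw [Ideal.mem_iInf]
    intro hp
    obtain ⟨C, hC, hle⟩ := exists_cover_of_minimalPrime hp
    exact Ideal.pow_right_mono hle k (monomial_mem_PC_pow (hcov C hC))
  rw [heq, clutterIdeal_pow, mem_monSpan_iff] at hmem
  have hsupp : a ∈ (monomial a 1 : MvPolynomial (Fin n) K).support := by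
    classical
    rw [support_monomial]
    rw [if_neg one_ne_zero]
    exact Finset.mem_singleton_self a
  obtain ⟨d, hd, hda⟩ := hmem a hsupp
  have := Dk_count T β hT hd
  have : ∑ v ∈ T, d v ≤ ∑ v ∈ T, a v := Finset.sum_le_sum (fun v _ => hda v)
  omega

lemma good_master (E : Set (Finset (Fin n))) (k : ℕ)
    (hcon : ∀ m : Fin n →₀ ℕ, (∀ C, MinCover E C → k ≤ ∑ i ∈ C, m i) → ∃ d ∈ Dk E k, d ≤ m) :
    symbPow (clutterIdeal K E) k = clutterIdeal K E ^ k := by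
  apply le_antisymm
  · intro f hf
    rw [clutterIdeal_pow, mem_monSpan_iff]
    intro m hm
    apply hcon
    intro C hC
    have hpc := minCover_mem_minimalPrimes (K := K) hC
    have hfC : f ∈ PC K C ^ k := by
      rw [symbPow, Ideal.mem_iInf] at hf
      have := hf (PC K C)
      rw [Ideal.mem_iInf] at this
      exact this hpc
    exact support_sum_of_mem_PC_pow hfC hm
  · rw [symbPow]
    apply le_iInf
    intro p
    apply le_iInf
    intro hp
    exact Ideal.pow_right_mono hp.1.2 k

lemma noncover {E : Set (Finset (Fin n))} {C : Finset (Fin n)} {e : Finset (Fin n)}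
    (he : e ∈ E) (h : ∀ x ∈ C, x ∉ e) : ¬ Cover E C := by
  intro hcov
  obtain ⟨x, hx, hxe⟩ := hcov e he
  exact h x hx hxe

lemma minCover_singleton {E : Set (Finset (Fin n))} {w : Fin n} (hne : E.Nonempty)
    (h : ∀ e ∈ E, w ∈ e) : MinCover E {w} := by
  refine ⟨fun e he => ⟨w, Finset.mem_singleton_self w, h e he⟩, ?_⟩
  intro C' hsub hcov
  obtain ⟨e, he⟩ := hne
  obtain ⟨x, hx, hxe⟩ := hcov e he
  have : x = w := Finset.mem_singleton.mp (hsub hx)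
  subst this
  apply Finset.Subset.antisymm hsub
  intro y hy
  rw [Finset.mem_singleton] at hy
  subst hy
  exact hx

lemma minCover_pair {E : Set (Finset (Fin n))} {u v : Fin n} (huv : u ≠ v)
    (h : ∀ e ∈ E, u ∈ e ∨ v ∈ e)
    {e1 : Finset (Fin n)} (he1 : e1 ∈ E) (hu1 : u ∉ e1)
    {e2 : Finset (Fin n)} (he2 : e2 ∈ E) (hv2 : v ∉ e2) :
    MinCover E ({u, v} : Finset (Fin n)) := by
  constructor
  · intro e he
    rcases h e he with h' | h'
    · exact ⟨u, by simp, h'⟩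
    · exact ⟨v, by simp, h'⟩
  · intro C' hsub hcov
    have hu : u ∈ C' := by
      by_contra hu
      refine noncover he2 ?_ hcov
      intro x hx
      have hx2 := hsub hx
      rw [Finset.mem_insert, Finset.mem_singleton] at hx2
      rcases hx2 with rfl | rfl
      · exact absurd hx hu
      · exact hv2
    have hv : v ∈ C' := by
      by_contra hv
      refine noncover he1 ?_ hcov
      intro x hx
      have hx2 := hsub hx
      rw [Finset.mem_insert, Finset.mem_singleton] at hx2
      rcases hx2 with rfl | rfl
      · exact hu1
      · exact absurd hx hv
    apply Finset.Subset.antisymm hsub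
    intro y hy
    rw [Finset.mem_insert, Finset.mem_singleton] at hy
    rcases hy with rfl | rfl
    · exact hu
    · exact hv

lemma minCover_triple {E : Set (Finset (Fin n))} {u v w : Fin n}
    (huv : u ≠ v) (huw : u ≠ w) (hvw : v ≠ w)
    (h : ∀ e ∈ E, u ∈ e ∨ v ∈ e ∨ w ∈ e)
    {evw : Finset (Fin n)} (hevw : evw ∈ E) (hv1 : v ∉ evw) (hw1 : w ∉ evw)
    {euw : Finset (Fin n)} (heuw : euw ∈ E) (hu2 : u ∉ euw) (hw2 : w ∉ euw)
    {euv : Finset (Fin n)} (heuv : euv ∈ E) (hu3 : u ∉ euv) (hv3 : v ∉ euv) :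
    MinCover E ({u, v, w} : Finset (Fin n)) := by
  constructor
  · intro e he
    rcases h e he with h' | h' | h'
    · exact ⟨u, by simp, h'⟩
    · exact ⟨v, by simp, h'⟩
    · exact ⟨w, by simp, h'⟩
  · intro C' hsub hcov
    have hmem : ∀ x ∈ C', x = u ∨ x = v ∨ x = w := by
      intro x hx
      have := hsub hx
      simpa using this
    have hu : u ∈ C' := by
      by_contra hu
      refine noncover hevw ?_ hcov
      intro x hx
      rcases hmem x hx with rfl | rfl | rfl
      · exact absurd hx hu
      · exact hv1
      · exact hw1
    have hv : v ∈ C' := by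
      by_contra hv
      refine noncover heuw ?_ hcov
      intro x hx
      rcases hmem x hx with rfl | rfl | rfl
      · exact hu2
      · exact absurd hx hv
      · exact hw2
    have hw : w ∈ C' := by
      by_contra hw
      refine noncover heuv ?_ hcov
      intro x hx
      rcases hmem x hx with rfl | rfl | rfl
      · exact hu3
      · exact hv3
      · exact absurd hx hw
    apply Finset.Subset.antisymm hsub
    intro y hy
    rcases (by simpa using hy : y = u ∨ y = v ∨ y = w) with rfl | rfl | rfl
    · exact hu
    · exact hv
    · exact hw

/-- complement of a pair -/
def pr (u v : Fin n) : Finset (Fin n) := ({u, v} : Finset (Fin n))ᶜ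

lemma mem_pr {u v x : Fin n} : x ∈ pr u v ↔ (x ≠ u ∧ x ≠ v) := by
  rw [pr, Finset.mem_compl, Finset.mem_insert, Finset.mem_singleton]
  tauto

/-- the statement we must verify for the good cases -/
def GoodAt (E : Set (Finset (Fin n))) (k : ℕ) : Prop :=
  ∀ m : Fin n →₀ ℕ, (∀ C, MinCover E C → k ≤ ∑ i ∈ C, m i) → ∃ d ∈ Dk E k, d ≤ m

lemma le_finsupp_iff {d m : Fin n →₀ ℕ} : d ≤ m ↔ ∀ v, d v ≤ m v := Finsupp.le_def

lemma d2_apply (q1 q2 : ℕ) (e1 e2 : Finset (Fin n)) (v : Fin n) :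
    (q1 • ind e1 + q2 • ind e2) v
      = q1 * (if v ∈ e1 then 1 else 0) + q2 * (if v ∈ e2 then 1 else 0) := by
  rw [Finsupp.add_apply, Finsupp.smul_apply, Finsupp.smul_apply, ind_apply, ind_apply,
    smul_eq_mul, smul_eq_mul]

lemma d3_apply (q1 q2 q3 : ℕ) (e1 e2 e3 : Finset (Fin n)) (v : Fin n) :
    (q1 • ind e1 + q2 • ind e2 + q3 • ind e3) v
      = q1 * (if v ∈ e1 then 1 else 0) + q2 * (if v ∈ e2 then 1 else 0)
        + q3 * (if v ∈ e3 then 1 else 0) := by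
  rw [Finsupp.add_apply, d2_apply, Finsupp.smul_apply, ind_apply, smul_eq_mul]

lemma d4_apply (q1 q2 q3 q4 : ℕ) (e1 e2 e3 e4 : Finset (Fin n)) (v : Fin n) :
    (q1 • ind e1 + q2 • ind e2 + q3 • ind e3 + q4 • ind e4) v
      = q1 * (if v ∈ e1 then 1 else 0) + q2 * (if v ∈ e2 then 1 else 0)
        + q3 * (if v ∈ e3 then 1 else 0) + q4 * (if v ∈ e4 then 1 else 0) := by
  rw [Finsupp.add_apply, d3_apply, Finsupp.smul_apply, ind_apply, smul_eq_mul]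

/-- G1 : a single edge -/
lemma good_G1 {E : Set (Finset (Fin n))} (e0 : Finset (Fin n)) (hE : E = {e0}) (k : ℕ) :
    GoodAt E k := by
  intro m hm
  have he0 : e0 ∈ E := by rw [hE]; rfl
  refine ⟨k • ind e0, smul_ind_mem_Dk he0 k, ?_⟩
  rw [le_finsupp_iff]
  intro v
  rw [Finsupp.smul_apply, ind_apply, smul_eq_mul]
  by_cases hv : v ∈ e0
  · rw [if_pos hv, mul_one]
    have := hm {v} (minCover_singleton ⟨e0, he0⟩ (by
      intro e he
      rw [hE] at he
      rw [Set.mem_singleton_iff] at he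
      subst he
      exact hv))
    simpa using this
  · simp [hv]

/-- G3 : path with two edges, F = {uc, cw} -/
lemma good_G3 {E : Set (Finset (Fin n))} (u c w : Fin n)
    (huc : u ≠ c) (huw : u ≠ w) (hcw : c ≠ w)
    (hE : E = {pr u c, pr c w}) (k : ℕ) : GoodAt E k := by
  intro m hm
  have he1 : pr u c ∈ E := by rw [hE]; left; rfl
  have he2 : pr c w ∈ E := by rw [hE]; right; rfl
  -- the pair {u, w} is a minimal cover
  have hpair : MinCover E ({u, w} : Finset (Fin n)) := by
    apply minCover_pair huw ?_ he1 ?_ he2 ?_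
    · intro e he
      rw [hE] at he
      rcases he with rfl | rfl
      · right; rw [mem_pr]; exact ⟨Ne.symm huw, Ne.symm hcw⟩
      · left; rw [mem_pr]; exact ⟨huc, huw⟩
    · exact fun h => (mem_pr.mp h).1 rfl
    · exact fun h => (mem_pr.mp h).2 rfl
  have hcons : k ≤ m u + m w := by
    have := hm _ hpair
    rwa [Finset.sum_pair huw] at this
  set q2 : ℕ := min (m u) k with hq2
  set q1 : ℕ := k - q2 with hq1
  refine ⟨q1 • ind (pr u c) + q2 • ind (pr c w), ?_, ?_⟩
  · have : q1 + q2 = k := by omega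
    rw [← this]
    exact Dk_add (smul_ind_mem_Dk he1 q1) (smul_ind_mem_Dk he2 q2)
  · rw [le_finsupp_iff]
    intro v
    rw [d2_apply]
    by_cases hvu : v = u
    · subst hvu
      have h1 : v ∉ pr v c := fun h => (mem_pr.mp h).1 rfl
      have h2 : v ∈ pr c w := by rw [mem_pr]; exact ⟨huc, huw⟩
      rw [if_neg h1, if_pos h2]
      omega
    · by_cases hvc : v = c
      · subst hvc
        have h1 : v ∉ pr u v := fun h => (mem_pr.mp h).2 rfl
        have h2 : v ∉ pr v w := fun h => (mem_pr.mp h).1 rfl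
        rw [if_neg h1, if_neg h2]
        omega
      · by_cases hvw : v = w
        · subst hvw
          have h1 : v ∈ pr u c := by rw [mem_pr]; exact ⟨fun h => huw h.symm, fun h => hcw h.symm⟩
          have h2 : v ∉ pr c v := fun h => (mem_pr.mp h).2 rfl
          rw [if_pos h1, if_neg h2]
          omega
        · have h1 : v ∈ pr u c := by rw [mem_pr]; exact ⟨hvu, hvc⟩
          have h2 : v ∈ pr c w := by rw [mem_pr]; exact ⟨hvc, hvw⟩
          rw [if_pos h1, if_pos h2]
          have hsing : MinCover E ({v} : Finset (Fin n)) := by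
            apply minCover_singleton ⟨_, he1⟩
            intro e he
            rw [hE] at he
            rcases he with rfl | rfl
            · exact h1
            · exact h2
          have := hm _ hsing
          simp only [Finset.sum_singleton] at this
          omega

/-- G2 : two disjoint edges, F = {αβ, γδ} -/
lemma good_G2 {E : Set (Finset (Fin n))} (a b g d : Fin n)
    (hab : a ≠ b) (hag : a ≠ g) (had : a ≠ d) (hbg : b ≠ g) (hbd : b ≠ d) (hgd : g ≠ d)
    (hE : E = {pr a b, pr g d}) (k : ℕ) : GoodAt E k := by
  intro m hm
  have he1 : pr a b ∈ E := by rw [hE]; left; rfl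
  have he2 : pr g d ∈ E := by rw [hE]; right; rfl
  have hcovall : ∀ x y : Fin n, (x = a ∨ x = b) → (y = g ∨ y = d) → ∀ e ∈ E, x ∈ e ∨ y ∈ e := by
    intro x y hx hy e he
    rw [hE] at he
    rcases he with rfl | rfl
    · right
      rw [mem_pr]
      rcases hy with rfl | rfl
      · exact ⟨Ne.symm hag, Ne.symm hbg⟩
      · exact ⟨Ne.symm had, Ne.symm hbd⟩
    · left
      rw [mem_pr]
      rcases hx with rfl | rfl
      · exact ⟨hag, had⟩
      · exact ⟨hbg, hbd⟩
  have hpairc : ∀ x y : Fin n, (x = a ∨ x = b) → (y = g ∨ y = d) → k ≤ m x + m y := by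
    intro x y hx hy
    have hxy : x ≠ y := by
      rcases hx with rfl | rfl <;> rcases hy with rfl | rfl <;> assumption
    have hx1 : x ∉ pr a b := by
      rcases hx with rfl | rfl
      · exact fun h => (mem_pr.mp h).1 rfl
      · exact fun h => (mem_pr.mp h).2 rfl
    have hy2 : y ∉ pr g d := by
      rcases hy with rfl | rfl
      · exact fun h => (mem_pr.mp h).1 rfl
      · exact fun h => (mem_pr.mp h).2 rfl
    have := hm _ (minCover_pair hxy (hcovall x y hx hy) he1 hx1 he2 hy2)
    rwa [Finset.sum_pair hxy] at this
  have hca : k ≤ m a + m g := hpairc a g (Or.inl rfl) (Or.inl rfl)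
  have hcb : k ≤ m b + m g := hpairc b g (Or.inr rfl) (Or.inl rfl)
  have hca' : k ≤ m a + m d := hpairc a d (Or.inl rfl) (Or.inr rfl)
  have hcb' : k ≤ m b + m d := hpairc b d (Or.inr rfl) (Or.inr rfl)
  set q2 : ℕ := min (min (m a) (m b)) k with hq2
  set q1 : ℕ := k - q2 with hq1
  refine ⟨q1 • ind (pr a b) + q2 • ind (pr g d), ?_, ?_⟩
  · have : q1 + q2 = k := by omega
    rw [← this]
    exact Dk_add (smul_ind_mem_Dk he1 q1) (smul_ind_mem_Dk he2 q2)
  · rw [le_finsupp_iff]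
    intro v
    rw [d2_apply]
    by_cases hva : v = a
    · subst hva
      rw [if_neg (fun h => (mem_pr.mp h).1 rfl), if_pos (mem_pr.mpr ⟨hag, had⟩)]
      omega
    · by_cases hvb : v = b
      · subst hvb
        rw [if_neg (fun h => (mem_pr.mp h).2 rfl), if_pos (mem_pr.mpr ⟨hbg, hbd⟩)]
        omega
      · by_cases hvg : v = g
        · subst hvg
          rw [if_pos (mem_pr.mpr ⟨Ne.symm hag, Ne.symm hbg⟩), if_neg (fun h => (mem_pr.mp h).1 rfl)]
          omega
        · by_cases hvd : v = d
          · subst hvd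
            rw [if_pos (mem_pr.mpr ⟨Ne.symm had, Ne.symm hbd⟩),
              if_neg (fun h => (mem_pr.mp h).2 rfl)]
            omega
          · rw [if_pos (mem_pr.mpr ⟨hva, hvb⟩), if_pos (mem_pr.mpr ⟨hvg, hvd⟩)]
            have hsing : MinCover E ({v} : Finset (Fin n)) := by
              apply minCover_singleton ⟨_, he1⟩
              intro e he
              rw [hE] at he
              rcases he with rfl | rfl
              · exact mem_pr.mpr ⟨hva, hvb⟩
              · exact mem_pr.mpr ⟨hvg, hvd⟩
            have := hm _ hsing
            simp only [Finset.sum_singleton] at this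
            omega

/-- G5 : triangle, F = {uv, vw, uw} -/
lemma good_G5 {E : Set (Finset (Fin n))} (u v w : Fin n)
    (huv : u ≠ v) (huw : u ≠ w) (hvw : v ≠ w)
    (hE : E = {pr v w, pr u w, pr u v}) (k : ℕ) : GoodAt E k := by
  intro m hm
  have he1 : pr v w ∈ E := by rw [hE]; left; rfl
  have he2 : pr u w ∈ E := by rw [hE]; right; left; rfl
  have he3 : pr u v ∈ E := by rw [hE]; right; right; rfl
  have htriple : MinCover E ({u, v, w} : Finset (Fin n)) := by
    apply minCover_triple huv huw hvw ?_ he1 (fun h => (mem_pr.mp h).1 rfl)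
      (fun h => (mem_pr.mp h).2 rfl) he2 (fun h => (mem_pr.mp h).1 rfl)
      (fun h => (mem_pr.mp h).2 rfl) he3 (fun h => (mem_pr.mp h).1 rfl)
      (fun h => (mem_pr.mp h).2 rfl)
    intro e he
    rw [hE] at he
    rcases he with rfl | rfl | rfl
    · exact Or.inl (mem_pr.mpr ⟨huv, huw⟩)
    · exact Or.inr (Or.inl (mem_pr.mpr ⟨Ne.symm huv, hvw⟩))
    · exact Or.inr (Or.inr (mem_pr.mpr ⟨Ne.symm huw, Ne.symm hvw⟩))
  have hcons : k ≤ m u + m v + m w := by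
    have := hm _ htriple
    have hsum : ∑ i ∈ ({u, v, w} : Finset (Fin n)), m i = m u + m v + m w := by
      rw [Finset.sum_insert (by simp [huv, huw]), Finset.sum_pair hvw, add_assoc]
    omega
  set xu : ℕ := min (m u) k with hxu
  set xv : ℕ := min (m v) (k - xu) with hxv
  set xw : ℕ := k - xu - xv with hxw
  refine ⟨xu • ind (pr v w) + xv • ind (pr u w) + xw • ind (pr u v), ?_, ?_⟩
  · have : xu + xv + xw = k := by omega
    rw [← this]
    exact Dk_add (Dk_add (smul_ind_mem_Dk he1 xu) (smul_ind_mem_Dk he2 xv))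
      (smul_ind_mem_Dk he3 xw)
  · rw [le_finsupp_iff]
    intro x
    rw [d3_apply]
    by_cases hx1 : x = u
    · subst hx1
      rw [if_pos (mem_pr.mpr ⟨huv, huw⟩), if_neg (fun h => (mem_pr.mp h).1 rfl),
        if_neg (fun h => (mem_pr.mp h).1 rfl)]
      omega
    · by_cases hx2 : x = v
      · subst hx2
        rw [if_neg (fun h => (mem_pr.mp h).1 rfl), if_pos (mem_pr.mpr ⟨Ne.symm huv, hvw⟩),
          if_neg (fun h => (mem_pr.mp h).2 rfl)]
        omega
      · by_cases hx3 : x = w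
        · subst hx3
          rw [if_neg (fun h => (mem_pr.mp h).2 rfl), if_neg (fun h => (mem_pr.mp h).2 rfl),
            if_pos (mem_pr.mpr ⟨Ne.symm huw, Ne.symm hvw⟩)]
          omega
        · rw [if_pos (mem_pr.mpr ⟨hx2, hx3⟩), if_pos (mem_pr.mpr ⟨hx1, hx3⟩),
            if_pos (mem_pr.mpr ⟨hx1, hx2⟩)]
          have hsing : MinCover E ({x} : Finset (Fin n)) := by
            apply minCover_singleton ⟨_, he1⟩
            intro e he
            rw [hE] at he
            rcases he with rfl | rfl | rfl
            · exact mem_pr.mpr ⟨hx2, hx3⟩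
            · exact mem_pr.mpr ⟨hx1, hx3⟩
            · exact mem_pr.mpr ⟨hx1, hx2⟩
          have := hm _ hsing
          simp only [Finset.sum_singleton] at this
          omega

/-- G4 : path with three edges, F = {uc, cw, wz} -/
lemma good_G4 {E : Set (Finset (Fin n))} (u c w z : Fin n)
    (huc : u ≠ c) (huw : u ≠ w) (huz : u ≠ z) (hcw : c ≠ w) (hcz : c ≠ z) (hwz : w ≠ z)
    (hE : E = {pr u c, pr c w, pr w z}) (k : ℕ) : GoodAt E k := by
  intro m hm
  have he1 : pr u c ∈ E := by rw [hE]; left; rfl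
  have he2 : pr c w ∈ E := by rw [hE]; right; left; rfl
  have he3 : pr w z ∈ E := by rw [hE]; right; right; rfl
  have hpuw : MinCover E ({u, w} : Finset (Fin n)) := by
    apply minCover_pair huw ?_ he1 (fun h => (mem_pr.mp h).1 rfl) he2
      (fun h => (mem_pr.mp h).2 rfl)
    intro e he
    rw [hE] at he
    rcases he with rfl | rfl | rfl
    · exact Or.inr (mem_pr.mpr ⟨Ne.symm huw, Ne.symm hcw⟩)
    · exact Or.inl (mem_pr.mpr ⟨huc, huw⟩)
    · exact Or.inl (mem_pr.mpr ⟨huw, huz⟩)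
  have hpuz : MinCover E ({u, z} : Finset (Fin n)) := by
    apply minCover_pair huz ?_ he1 (fun h => (mem_pr.mp h).1 rfl) he3
      (fun h => (mem_pr.mp h).2 rfl)
    intro e he
    rw [hE] at he
    rcases he with rfl | rfl | rfl
    · exact Or.inr (mem_pr.mpr ⟨Ne.symm huz, Ne.symm hcz⟩)
    · exact Or.inl (mem_pr.mpr ⟨huc, huw⟩)
    · exact Or.inl (mem_pr.mpr ⟨huw, huz⟩)
  have hpcz : MinCover E ({c, z} : Finset (Fin n)) := by
    apply minCover_pair hcz ?_ he1 (fun h => (mem_pr.mp h).2 rfl) he3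
      (fun h => (mem_pr.mp h).2 rfl)
    intro e he
    rw [hE] at he
    rcases he with rfl | rfl | rfl
    · exact Or.inr (mem_pr.mpr ⟨Ne.symm huz, Ne.symm hcz⟩)
    · exact Or.inr (mem_pr.mpr ⟨Ne.symm hcz, Ne.symm hwz⟩)
    · exact Or.inl (mem_pr.mpr ⟨hcw, hcz⟩)
  have hc1 : k ≤ m u + m w := by have := hm _ hpuw; rwa [Finset.sum_pair huw] at this
  have hc2 : k ≤ m u + m z := by have := hm _ hpuz; rwa [Finset.sum_pair huz] at this
  have hc3 : k ≤ m c + m z := by have := hm _ hpcz; rwa [Finset.sum_pair hcz] at this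
  set s : ℕ := min (m z) k with hs
  set q3 : ℕ := k - s with hq3
  set q1 : ℕ := min (m w) s with hq1
  set q2 : ℕ := s - q1 with hq2
  refine ⟨q1 • ind (pr u c) + q2 • ind (pr c w) + q3 • ind (pr w z), ?_, ?_⟩
  · have : q1 + q2 + q3 = k := by omega
    rw [← this]
    exact Dk_add (Dk_add (smul_ind_mem_Dk he1 q1) (smul_ind_mem_Dk he2 q2))
      (smul_ind_mem_Dk he3 q3)
  · rw [le_finsupp_iff]
    intro x
    rw [d3_apply]
    by_cases hx1 : x = u
    · subst hx1
      rw [if_neg (fun h => (mem_pr.mp h).1 rfl), if_pos (mem_pr.mpr ⟨huc, huw⟩),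
        if_pos (mem_pr.mpr ⟨huw, huz⟩)]
      omega
    · by_cases hx2 : x = c
      · subst hx2
        rw [if_neg (fun h => (mem_pr.mp h).2 rfl), if_neg (fun h => (mem_pr.mp h).1 rfl),
          if_pos (mem_pr.mpr ⟨hcw, hcz⟩)]
        omega
      · by_cases hx3 : x = w
        · subst hx3
          rw [if_pos (mem_pr.mpr ⟨Ne.symm huw, Ne.symm hcw⟩),
            if_neg (fun h => (mem_pr.mp h).2 rfl), if_neg (fun h => (mem_pr.mp h).1 rfl)]
          omega
        · by_cases hx4 : x = z
          · subst hx4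
            rw [if_pos (mem_pr.mpr ⟨Ne.symm huz, Ne.symm hcz⟩),
              if_pos (mem_pr.mpr ⟨Ne.symm hcz, Ne.symm hwz⟩),
              if_neg (fun h => (mem_pr.mp h).2 rfl)]
            omega
          · rw [if_pos (mem_pr.mpr ⟨hx1, hx2⟩), if_pos (mem_pr.mpr ⟨hx2, hx3⟩),
              if_pos (mem_pr.mpr ⟨hx3, hx4⟩)]
            have hsing : MinCover E ({x} : Finset (Fin n)) := by
              apply minCover_singleton ⟨_, he1⟩
              intro e he
              rw [hE] at he
              rcases he with rfl | rfl | rfl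
              · exact mem_pr.mpr ⟨hx1, hx2⟩
              · exact mem_pr.mpr ⟨hx2, hx3⟩
              · exact mem_pr.mpr ⟨hx3, hx4⟩
            have := hm _ hsing
            simp only [Finset.sum_singleton] at this
            omega

/-- G6 : four-cycle, F = {uc, cw, wz, zu} -/
lemma good_G6 {E : Set (Finset (Fin n))} (u c w z : Fin n)
    (huc : u ≠ c) (huw : u ≠ w) (huz : u ≠ z) (hcw : c ≠ w) (hcz : c ≠ z) (hwz : w ≠ z)
    (hE : E = {pr u c, pr c w, pr w z, pr z u}) (k : ℕ) : GoodAt E k := by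
  intro m hm
  have he1 : pr u c ∈ E := by rw [hE]; left; rfl
  have he2 : pr c w ∈ E := by rw [hE]; right; left; rfl
  have he3 : pr w z ∈ E := by rw [hE]; right; right; left; rfl
  have he4 : pr z u ∈ E := by rw [hE]; right; right; right; rfl
  have hpuw : MinCover E ({u, w} : Finset (Fin n)) := by
    apply minCover_pair huw ?_ he1 (fun h => (mem_pr.mp h).1 rfl) he2
      (fun h => (mem_pr.mp h).2 rfl)
    intro e he
    rw [hE] at he
    rcases he with rfl | rfl | rfl | rfl
    · exact Or.inr (mem_pr.mpr ⟨Ne.symm huw, Ne.symm hcw⟩)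
    · exact Or.inl (mem_pr.mpr ⟨huc, huw⟩)
    · exact Or.inl (mem_pr.mpr ⟨huw, huz⟩)
    · exact Or.inr (mem_pr.mpr ⟨hwz, Ne.symm huw⟩)
  have hpcz : MinCover E ({c, z} : Finset (Fin n)) := by
    apply minCover_pair hcz ?_ he1 (fun h => (mem_pr.mp h).2 rfl) he3
      (fun h => (mem_pr.mp h).2 rfl)
    intro e he
    rw [hE] at he
    rcases he with rfl | rfl | rfl | rfl
    · exact Or.inr (mem_pr.mpr ⟨Ne.symm huz, Ne.symm hcz⟩)
    · exact Or.inr (mem_pr.mpr ⟨Ne.symm hcz, Ne.symm hwz⟩)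
    · exact Or.inl (mem_pr.mpr ⟨hcw, hcz⟩)
    · exact Or.inl (mem_pr.mpr ⟨hcz, Ne.symm huc⟩)
  have hc1 : k ≤ m u + m w := by have := hm _ hpuw; rwa [Finset.sum_pair huw] at this
  have hc2 : k ≤ m c + m z := by have := hm _ hpcz; rwa [Finset.sum_pair hcz] at this
  set A : ℕ := min (m u) k with hA
  set B : ℕ := min (m c) k with hB
  set q3 : ℕ := min A B with hq3
  set q2 : ℕ := A - q3 with hq2
  set q4 : ℕ := B - q3 with hq4
  set q1 : ℕ := k - max A B with hq1
  refine ⟨q1 • ind (pr u c) + q2 • ind (pr c w) + q3 • ind (pr w z) + q4 • ind (pr z u),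
    ?_, ?_⟩
  · have : q1 + q2 + q3 + q4 = k := by omega
    rw [← this]
    exact Dk_add (Dk_add (Dk_add (smul_ind_mem_Dk he1 q1) (smul_ind_mem_Dk he2 q2))
      (smul_ind_mem_Dk he3 q3)) (smul_ind_mem_Dk he4 q4)
  · rw [le_finsupp_iff]
    intro x
    rw [d4_apply]
    by_cases hx1 : x = u
    · subst hx1
      rw [if_neg (fun h => (mem_pr.mp h).1 rfl), if_pos (mem_pr.mpr ⟨huc, huw⟩),
        if_pos (mem_pr.mpr ⟨huw, huz⟩), if_neg (fun h => (mem_pr.mp h).2 rfl)]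
      omega
    · by_cases hx2 : x = c
      · subst hx2
        rw [if_neg (fun h => (mem_pr.mp h).2 rfl), if_neg (fun h => (mem_pr.mp h).1 rfl),
          if_pos (mem_pr.mpr ⟨hcw, hcz⟩), if_pos (mem_pr.mpr ⟨hcz, Ne.symm huc⟩)]
        omega
      · by_cases hx3 : x = w
        · subst hx3
          rw [if_pos (mem_pr.mpr ⟨Ne.symm huw, Ne.symm hcw⟩),
            if_neg (fun h => (mem_pr.mp h).2 rfl), if_neg (fun h => (mem_pr.mp h).1 rfl),
            if_pos (mem_pr.mpr ⟨hwz, Ne.symm huw⟩)]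
          omega
        · by_cases hx4 : x = z
          · subst hx4
            rw [if_pos (mem_pr.mpr ⟨Ne.symm huz, Ne.symm hcz⟩),
              if_pos (mem_pr.mpr ⟨Ne.symm hcz, Ne.symm hwz⟩),
              if_neg (fun h => (mem_pr.mp h).2 rfl), if_neg (fun h => (mem_pr.mp h).1 rfl)]
            omega
          · rw [if_pos (mem_pr.mpr ⟨hx1, hx2⟩), if_pos (mem_pr.mpr ⟨hx2, hx3⟩),
              if_pos (mem_pr.mpr ⟨hx3, hx4⟩), if_pos (mem_pr.mpr ⟨hx4, hx1⟩)]
            have hsing : MinCover E ({x} : Finset (Fin n)) := by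
              apply minCover_singleton ⟨_, he1⟩
              intro e he
              rw [hE] at he
              rcases he with rfl | rfl | rfl | rfl
              · exact mem_pr.mpr ⟨hx1, hx2⟩
              · exact mem_pr.mpr ⟨hx2, hx3⟩
              · exact mem_pr.mpr ⟨hx3, hx4⟩
              · exact mem_pr.mpr ⟨hx4, hx1⟩
            have := hm _ hsing
            simp only [Finset.sum_singleton] at this
            omega

lemma pr_comm (a b : Fin n) : pr a b = pr b a := by rw [pr, pr, Finset.pair_comm]

lemma single_le_suma {C : Finset (Fin n)} {a : Fin n →₀ ℕ} {x : Fin n} (hx : x ∈ C) :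
    a x ≤ ∑ i ∈ C, a i :=
  Finset.single_le_sum (fun i _ => Nat.zero_le (a i)) hx

lemma pair_le_suma {C : Finset (Fin n)} {a : Fin n →₀ ℕ} {x y : Fin n} (hx : x ∈ C)
    (hy : y ∈ C) (hxy : x ≠ y) : a x + a y ≤ ∑ i ∈ C, a i := by
  have hsub : ({x, y} : Finset (Fin n)) ⊆ C := by
    intro t ht
    rcases Finset.mem_insert.mp ht with rfl | ht
    · exact hx
    · rw [Finset.mem_singleton] at ht; subst ht; exact hy
  calc a x + a y = ∑ i ∈ ({x, y} : Finset (Fin n)), a i := (Finset.sum_pair hxy).symm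
  _ ≤ ∑ i ∈ C, a i := Finset.sum_le_sum_of_subset hsub

lemma card_sdiff_le_two {E : Set (Finset (Fin n))} (hunif : ∀ e ∈ E, e.card = n - 2)
    {e : Finset (Fin n)} (he : e ∈ E) (T : Finset (Fin n)) : (T \ e).card ≤ 2 := by
  have h1 : T \ e ⊆ eᶜ := by
    intro x hx
    rw [Finset.mem_compl]
    exact (Finset.mem_sdiff.mp hx).2
  have h2 : (eᶜ : Finset (Fin n)).card = n - e.card := by
    rw [Finset.card_compl, Fintype.card_fin]
  have := Finset.card_le_card h1
  rw [h2, hunif e he] at this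
  omega

/-- BAD1 : a vertex of degree at least 3 -/
lemma bad_F1 {E : Set (Finset (Fin n))} (hunif : ∀ e ∈ E, e.card = n - 2)
    (c l1 l2 l3 : Fin n)
    (h1 : c ≠ l1) (h2 : c ≠ l2) (h3 : c ≠ l3) (h12 : l1 ≠ l2) (h13 : l1 ≠ l3) (h23 : l2 ≠ l3)
    (he1 : pr c l1 ∈ E) (he2 : pr c l2 ∈ E) (he3 : pr c l3 ∈ E)
    (k : ℕ) (hk : 2 ≤ k) :
    symbPow (clutterIdeal K E) k ≠ clutterIdeal K E ^ k := by
  classical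
  set val : Fin n → ℕ := fun x =>
    if x = c then 0 else if x = l1 then 1 else if x = l2 then k - 1 else
      if x = l3 then k - 1 else k with hval
  set a : Fin n →₀ ℕ := Finsupp.equivFunOnFinite.symm val with ha
  have ha_apply : ∀ x, a x = val x := fun x => rfl
  have hvc : a c = 0 := by rw [ha_apply]; simp [hval]
  have hvl1 : a l1 = 1 := by rw [ha_apply]; simp [hval, Ne.symm h1]
  have hvl2 : a l2 = k - 1 := by rw [ha_apply]; simp [hval, Ne.symm h2, Ne.symm h12]
  have hvl3 : a l3 = k - 1 := by
    rw [ha_apply]; simp [hval, Ne.symm h3, Ne.symm h13, Ne.symm h23]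
  apply bad_master E a k ({c, l1, l2, l3} : Finset (Fin n)) 2
  · -- every cover has a-weight at least k
    intro C hC
    by_contra hlt
    push_neg at hlt
    have hmem : ∀ x ∈ C, x = c ∨ x = l1 ∨ x = l2 ∨ x = l3 := by
      intro x hx
      by_contra hx'
      push_neg at hx'
      obtain ⟨n1, n2, n3, n4⟩ := hx'
      have hax : a x = k := by rw [ha_apply]; simp [hval, n1, n2, n3, n4]
      have := single_le_suma (a := a) hx
      omega
    have hl1l2 : ¬(l1 ∈ C ∧ l2 ∈ C) := by
      rintro ⟨hy, hz⟩
      have := pair_le_suma (a := a) hy hz h12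
      omega
    have hl1l3 : ¬(l1 ∈ C ∧ l3 ∈ C) := by
      rintro ⟨hy, hz⟩
      have := pair_le_suma (a := a) hy hz h13
      omega
    have hl2l3 : ¬(l2 ∈ C ∧ l3 ∈ C) := by
      rintro ⟨hy, hz⟩
      have := pair_le_suma (a := a) hy hz h23
      omega
    by_cases hm1 : l1 ∈ C
    · obtain ⟨x, hxC, hxe⟩ := hC (pr c l1) he1
      rcases hmem x hxC with rfl | rfl | rfl | rfl
      · exact (mem_pr.mp hxe).1 rfl
      · exact (mem_pr.mp hxe).2 rfl
      · exact hl1l2 ⟨hm1, hxC⟩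
      · exact hl1l3 ⟨hm1, hxC⟩
    · by_cases hm2 : l2 ∈ C
      · obtain ⟨x, hxC, hxe⟩ := hC (pr c l2) he2
        rcases hmem x hxC with rfl | rfl | rfl | rfl
        · exact (mem_pr.mp hxe).1 rfl
        · exact hm1 hxC
        · exact (mem_pr.mp hxe).2 rfl
        · exact hl2l3 ⟨hm2, hxC⟩
      · by_cases hm3 : l3 ∈ C
        · obtain ⟨x, hxC, hxe⟩ := hC (pr c l3) he3
          rcases hmem x hxC with rfl | rfl | rfl | rfl
          · exact (mem_pr.mp hxe).1 rfl
          · exact hm1 hxC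
          · exact hm2 hxC
          · exact (mem_pr.mp hxe).2 rfl
        · obtain ⟨x, hxC, hxe⟩ := hC (pr c l1) he1
          rcases hmem x hxC with rfl | rfl | rfl | rfl
          · exact (mem_pr.mp hxe).1 rfl
          · exact hm1 hxC
          · exact hm2 hxC
          · exact hm3 hxC
  · intro e he
    exact card_sdiff_le_two hunif he _
  · have hnm1 : c ∉ ({l1, l2, l3} : Finset (Fin n)) := by simp [h1, h2, h3]
    have hnm2 : l1 ∉ ({l2, l3} : Finset (Fin n)) := by simp [h12, h13]
    rw [Finset.sum_insert hnm1, Finset.sum_insert hnm2, Finset.sum_pair h23,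
      Finset.card_insert_of_notMem hnm1, Finset.card_insert_of_notMem hnm2,
      Finset.card_pair h23]
    rw [hvc, hvl1, hvl2, hvl3]
    have : (1 + 2) - 2 = 1 + 1 + 1 - 2 := by norm_num
    omega

/-- BAD3 : two adjacent edges plus a disjoint edge -/
lemma bad_F3 {E : Set (Finset (Fin n))} (hunif : ∀ e ∈ E, e.card = n - 2)
    (u c w p q : Fin n)
    (huc : u ≠ c) (huw : u ≠ w) (hup : u ≠ p) (huq : u ≠ q)
    (hcw : c ≠ w) (hcp : c ≠ p) (hcq : c ≠ q)
    (hwp : w ≠ p) (hwq : w ≠ q) (hpq : p ≠ q)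
    (he1 : pr u c ∈ E) (he2 : pr c w ∈ E) (he3 : pr p q ∈ E)
    (k : ℕ) (hk : 2 ≤ k) :
    symbPow (clutterIdeal K E) k ≠ clutterIdeal K E ^ k := by
  classical
  set t1 : ℕ := k / 2 with ht1
  set t2 : ℕ := k - k / 2 with ht2
  set val : Fin n → ℕ := fun x =>
    if x = u then t2 else if x = c then t2 else if x = w then t2 else
      if x = p then t1 else if x = q then t1 else k with hval
  set a : Fin n →₀ ℕ := Finsupp.equivFunOnFinite.symm val with ha
  have ha_apply : ∀ x, a x = val x := fun x => rfl
  have hvu : a u = t2 := by rw [ha_apply]; simp [hval]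
  have hvc : a c = t2 := by rw [ha_apply]; simp [hval, Ne.symm huc]
  have hvw : a w = t2 := by rw [ha_apply]; simp [hval, Ne.symm huw, Ne.symm hcw]
  have hvp : a p = t1 := by
    rw [ha_apply]; simp [hval, Ne.symm hup, Ne.symm hcp, Ne.symm hwp]
  have hvq : a q = t1 := by
    rw [ha_apply]; simp [hval, Ne.symm huq, Ne.symm hcq, Ne.symm hwq, Ne.symm hpq]
  apply bad_master E a k ({u, c, w, p, q} : Finset (Fin n)) 2
  · intro C hC
    by_contra hlt
    push_neg at hlt
    have hmem : ∀ x ∈ C, x = u ∨ x = c ∨ x = w ∨ x = p ∨ x = q := by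
      intro x hx
      by_contra hx'
      push_neg at hx'
      obtain ⟨n1, n2, n3, n4, n5⟩ := hx'
      have hax : a x = k := by rw [ha_apply]; simp [hval, n1, n2, n3, n4, n5]
      have := single_le_suma (a := a) hx
      omega
    have hbig : ∀ {y z : Fin n}, y ∈ C → z ∈ C → y ≠ z → k ≤ a y + a z → False := by
      intro y z hy hz hyz hsum
      have := pair_le_suma (a := a) hy hz hyz
      omega
    by_cases hmu : u ∈ C
    · obtain ⟨x, hxC, hxe⟩ := hC (pr u c) he1
      rcases hmem x hxC with rfl | rfl | rfl | rfl | rfl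
      · exact (mem_pr.mp hxe).1 rfl
      · exact (mem_pr.mp hxe).2 rfl
      · exact hbig hmu hxC huw (by omega)
      · exact hbig hmu hxC hup (by omega)
      · exact hbig hmu hxC huq (by omega)
    · by_cases hmc : c ∈ C
      · obtain ⟨x, hxC, hxe⟩ := hC (pr u c) he1
        rcases hmem x hxC with rfl | rfl | rfl | rfl | rfl
        · exact hmu hxC
        · exact (mem_pr.mp hxe).2 rfl
        · exact hbig hmc hxC hcw (by omega)
        · exact hbig hmc hxC hcp (by omega)
        · exact hbig hmc hxC hcq (by omega)
      · by_cases hmw : w ∈ C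
        · obtain ⟨x, hxC, hxe⟩ := hC (pr c w) he2
          rcases hmem x hxC with rfl | rfl | rfl | rfl | rfl
          · exact hmu hxC
          · exact hmc hxC
          · exact (mem_pr.mp hxe).2 rfl
          · exact hbig hmw hxC hwp (by omega)
          · exact hbig hmw hxC hwq (by omega)
        · obtain ⟨x, hxC, hxe⟩ := hC (pr p q) he3
          rcases hmem x hxC with rfl | rfl | rfl | rfl | rfl
          · exact hmu hxC
          · exact hmc hxC
          · exact hmw hxC
          · exact (mem_pr.mp hxe).1 rfl
          · exact (mem_pr.mp hxe).2 rfl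
  · intro e he
    exact card_sdiff_le_two hunif he _
  · have hnm1 : u ∉ ({c, w, p, q} : Finset (Fin n)) := by simp [huc, huw, hup, huq]
    have hnm2 : c ∉ ({w, p, q} : Finset (Fin n)) := by simp [hcw, hcp, hcq]
    have hnm3 : w ∉ ({p, q} : Finset (Fin n)) := by simp [hwp, hwq]
    rw [Finset.sum_insert hnm1, Finset.sum_insert hnm2, Finset.sum_insert hnm3,
      Finset.sum_pair hpq, Finset.card_insert_of_notMem hnm1,
      Finset.card_insert_of_notMem hnm2, Finset.card_insert_of_notMem hnm3,
      Finset.card_pair hpq]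
    rw [hvu, hvc, hvw, hvp, hvq]
    omega

/-- BAD4 : three pairwise nonadjacent non-isolated vertices -/
lemma bad_F4 {E : Set (Finset (Fin n))} (hunif : ∀ e ∈ E, e.card = n - 2)
    (u1 u2 u3 v1 v2 v3 : Fin n)
    (h12 : u1 ≠ u2) (h13 : u1 ≠ u3) (h23 : u2 ≠ u3)
    (hv1 : u1 ≠ v1) (hv2 : u2 ≠ v2) (hv3 : u3 ≠ v3)
    (he1 : pr u1 v1 ∈ E) (he2 : pr u2 v2 ∈ E) (he3 : pr u3 v3 ∈ E)
    (hna12 : pr u1 u2 ∉ E) (hna13 : pr u1 u3 ∉ E) (hna23 : pr u2 u3 ∉ E)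
    (k : ℕ) (hk : 2 ≤ k) :
    symbPow (clutterIdeal K E) k ≠ clutterIdeal K E ^ k := by
  classical
  set t1 : ℕ := k / 2 with ht1
  set t2 : ℕ := k - k / 2 with ht2
  set val : Fin n → ℕ := fun x =>
    if x = u1 then t1 else if x = u2 then t2 else if x = u3 then t2 else k with hval
  set a : Fin n →₀ ℕ := Finsupp.equivFunOnFinite.symm val with ha
  have ha_apply : ∀ x, a x = val x := fun x => rfl
  have hw1 : a u1 = t1 := by rw [ha_apply]; simp [hval]
  have hw2 : a u2 = t2 := by rw [ha_apply]; simp [hval, Ne.symm h12]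
  have hw3 : a u3 = t2 := by rw [ha_apply]; simp [hval, Ne.symm h13, Ne.symm h23]
  apply bad_master E a k ({u1, u2, u3} : Finset (Fin n)) 1
  · intro C hC
    by_contra hlt
    push_neg at hlt
    have hmem : ∀ x ∈ C, x = u1 ∨ x = u2 ∨ x = u3 := by
      intro x hx
      by_contra hx'
      push_neg at hx'
      obtain ⟨n1, n2, n3⟩ := hx'
      have hax : a x = k := by rw [ha_apply]; simp [hval, n1, n2, n3]
      have := single_le_suma (a := a) hx
      omega
    have hbig : ∀ {y z : Fin n}, y ∈ C → z ∈ C → y ≠ z → k ≤ a y + a z → False := by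
      intro y z hy hz hyz hsum
      have := pair_le_suma (a := a) hy hz hyz
      omega
    by_cases hm1 : u1 ∈ C
    · obtain ⟨x, hxC, hxe⟩ := hC (pr u1 v1) he1
      rcases hmem x hxC with rfl | rfl | rfl
      · exact (mem_pr.mp hxe).1 rfl
      · exact hbig hm1 hxC h12 (by omega)
      · exact hbig hm1 hxC h13 (by omega)
    · by_cases hm2 : u2 ∈ C
      · obtain ⟨x, hxC, hxe⟩ := hC (pr u2 v2) he2
        rcases hmem x hxC with rfl | rfl | rfl
        · exact hm1 hxC
        · exact (mem_pr.mp hxe).1 rfl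
        · exact hbig hm2 hxC h23 (by omega)
      · by_cases hm3 : u3 ∈ C
        · obtain ⟨x, hxC, hxe⟩ := hC (pr u3 v3) he3
          rcases hmem x hxC with rfl | rfl | rfl
          · exact hm1 hxC
          · exact hm2 hxC
          · exact (mem_pr.mp hxe).1 rfl
        · obtain ⟨x, hxC, hxe⟩ := hC (pr u1 v1) he1
          rcases hmem x hxC with rfl | rfl | rfl
          · exact hm1 hxC
          · exact hm2 hxC
          · exact hm3 hxC
  · -- each edge misses at most one of the three
    intro e he
    by_contra hcard
    push_neg at hcard
    obtain ⟨x, hx, y, hy, hxy⟩ := Finset.one_lt_card.mp hcard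
    have hxT := Finset.mem_sdiff.mp hx
    have hyT := Finset.mem_sdiff.mp hy
    have hsub : ({x, y} : Finset (Fin n)) ⊆ eᶜ := by
      intro t ht
      rcases Finset.mem_insert.mp ht with rfl | ht
      · exact Finset.mem_compl.mpr hxT.2
      · rw [Finset.mem_singleton] at ht; subst ht; exact Finset.mem_compl.mpr hyT.2
    have hcompl : (eᶜ : Finset (Fin n)).card ≤ 2 := by
      rw [Finset.card_compl, Fintype.card_fin, hunif e he]
      omega
    have hpair : ({x, y} : Finset (Fin n)).card = 2 := Finset.card_pair hxy
    have heq : ({x, y} : Finset (Fin n)) = eᶜ :=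
      Finset.eq_of_subset_of_card_le hsub (by omega)
    have hee : e = pr x y := by
      rw [pr, heq, compl_compl]
    have hmemx : x = u1 ∨ x = u2 ∨ x = u3 := by
      have := hxT.1
      simpa using this
    have hmemy : y = u1 ∨ y = u2 ∨ y = u3 := by
      have := hyT.1
      simpa using this
    rcases hmemx with rfl | rfl | rfl <;> rcases hmemy with rfl | rfl | rfl
    · exact hxy rfl
    · exact hna12 (hee ▸ he)
    · exact hna13 (hee ▸ he)
    · exact hna12 (by rw [pr_comm] at hee; exact hee ▸ he)
    · exact hxy rfl
    · exact hna23 (hee ▸ he)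
    · exact hna13 (by rw [pr_comm] at hee; exact hee ▸ he)
    · exact hna23 (by rw [pr_comm] at hee; exact hee ▸ he)
    · exact hxy rfl
  · have hnm1 : u1 ∉ ({u2, u3} : Finset (Fin n)) := by simp [h12, h13]
    rw [Finset.sum_insert hnm1, Finset.sum_pair h23,
      Finset.card_insert_of_notMem hnm1, Finset.card_pair h23]
    rw [hw1, hw2, hw3]
    omega

/-- definitions of the nine structural alternatives -/
def IsB1 (E : Set (Finset (Fin n))) : Prop :=
  ∃ c l1 l2 l3 : Fin n, c ≠ l1 ∧ c ≠ l2 ∧ c ≠ l3 ∧ l1 ≠ l2 ∧ l1 ≠ l3 ∧ l2 ≠ l3 ∧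
    pr c l1 ∈ E ∧ pr c l2 ∈ E ∧ pr c l3 ∈ E

def IsB3 (E : Set (Finset (Fin n))) : Prop :=
  ∃ u c w p q : Fin n, u ≠ c ∧ u ≠ w ∧ u ≠ p ∧ u ≠ q ∧ c ≠ w ∧ c ≠ p ∧ c ≠ q ∧
    w ≠ p ∧ w ≠ q ∧ p ≠ q ∧ pr u c ∈ E ∧ pr c w ∈ E ∧ pr p q ∈ E

def IsB4 (E : Set (Finset (Fin n))) : Prop :=
  ∃ u1 u2 u3 v1 v2 v3 : Fin n, u1 ≠ u2 ∧ u1 ≠ u3 ∧ u2 ≠ u3 ∧ u1 ≠ v1 ∧ u2 ≠ v2 ∧ u3 ≠ v3 ∧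
    pr u1 v1 ∈ E ∧ pr u2 v2 ∈ E ∧ pr u3 v3 ∈ E ∧
    pr u1 u2 ∉ E ∧ pr u1 u3 ∉ E ∧ pr u2 u3 ∉ E

def IsG1 (E : Set (Finset (Fin n))) : Prop := ∃ u v : Fin n, u ≠ v ∧ E = {pr u v}

def IsG2 (E : Set (Finset (Fin n))) : Prop :=
  ∃ a b g d : Fin n, a ≠ b ∧ a ≠ g ∧ a ≠ d ∧ b ≠ g ∧ b ≠ d ∧ g ≠ d ∧ E = {pr a b, pr g d}

def IsG3 (E : Set (Finset (Fin n))) : Prop :=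
  ∃ u c w : Fin n, u ≠ c ∧ u ≠ w ∧ c ≠ w ∧ E = {pr u c, pr c w}

def IsG4 (E : Set (Finset (Fin n))) : Prop :=
  ∃ u c w z : Fin n, u ≠ c ∧ u ≠ w ∧ u ≠ z ∧ c ≠ w ∧ c ≠ z ∧ w ≠ z ∧
    E = {pr u c, pr c w, pr w z}

def IsG5 (E : Set (Finset (Fin n))) : Prop :=
  ∃ u v w : Fin n, u ≠ v ∧ u ≠ w ∧ v ≠ w ∧ E = {pr v w, pr u w, pr u v}

def IsG6 (E : Set (Finset (Fin n))) : Prop :=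
  ∃ u c w z : Fin n, u ≠ c ∧ u ≠ w ∧ u ≠ z ∧ c ≠ w ∧ c ≠ z ∧ w ≠ z ∧
    E = {pr u c, pr c w, pr w z, pr z u}

lemma pr_mem_ne {E : Set (Finset (Fin n))} (hunif : ∀ e ∈ E, e.card = n - 2)
    (h0 : ∅ ∉ E) {a b : Fin n} (h : pr a b ∈ E) : a ≠ b := by
  intro hab
  subst hab
  have h1 : pr a a = ({a} : Finset (Fin n))ᶜ := by rw [pr]; congr 1; simp
  have h2 := hunif _ h
  rw [h1, Finset.card_compl, Fintype.card_fin, Finset.card_singleton] at h2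
  have hn : 1 ≤ n := by
    have : (0 : ℕ) < n := Fin.pos a
    omega
  have hn1 : n = 1 := by omega
  have : pr a a = ∅ := by
    rw [h1]
    rw [← Finset.card_eq_zero, Finset.card_compl, Fintype.card_fin, Finset.card_singleton]
    omega
  rw [this] at h
  exact h0 h

lemma edge_form {E : Set (Finset (Fin n))} (hunif : ∀ e ∈ E, e.card = n - 2)
    (h0 : ∅ ∉ E) {e : Finset (Fin n)} (he : e ∈ E) : ∃ u v, u ≠ v ∧ e = pr u v := by
  have hcard := hunif e he
  have hne : e.Nonempty := by
    rcases Finset.eq_empty_or_nonempty e with rfl | h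
    · exact absurd he h0
    · exact h
  have h1 : 1 ≤ e.card := Finset.card_pos.mpr hne
  have hcc : (eᶜ : Finset (Fin n)).card = 2 := by
    rw [Finset.card_compl, Fintype.card_fin, hcard]
    have : e.card ≤ n := by
      have := Finset.card_le_card (Finset.subset_univ e)
      simpa using this
    omega
  obtain ⟨u, v, huv, heq⟩ := Finset.card_eq_two.mp hcc
  exact ⟨u, v, huv, by rw [pr, ← heq, compl_compl]⟩

theorem classify {E : Set (Finset (Fin n))} (hunif : ∀ e ∈ E, e.card = n - 2)
    (hne : E.Nonempty) (h0 : ∅ ∉ E) :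
    IsB1 E ∨ IsB3 E ∨ IsB4 E ∨ IsG1 E ∨ IsG2 E ∨ IsG3 E ∨ IsG4 E ∨ IsG5 E ∨ IsG6 E := by
  classical
  by_cases hB1 : IsB1 E
  · exact Or.inl hB1
  by_cases hB3 : IsB3 E
  · exact Or.inr (Or.inl hB3)
  by_cases hB4 : IsB4 E
  · exact Or.inr (Or.inr (Or.inl hB4))
  -- now no bad configuration exists
  right; right; right
  have hne' : ∀ {a b : Fin n}, pr a b ∈ E → a ≠ b := fun h => pr_mem_ne hunif h0 h
  have pr_inj : ∀ {a b g d : Fin n}, pr a b = pr g d → ({a, b} : Finset (Fin n)) = {g, d} := by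
    intro a b g d h
    rw [pr, pr] at h
    have := congrArg (fun (s : Finset (Fin n)) => sᶜ) h
    simpa using this
  by_cases hA : ∃ c u w : Fin n, u ≠ w ∧ pr c u ∈ E ∧ pr c w ∈ E
  · obtain ⟨c, u, w, huw, hcu, hcw⟩ := hA
    have hcu' : c ≠ u := hne' hcu
    have hcw' : c ≠ w := hne' hcw
    have hB1' : ∀ c' l1 l2 l3 : Fin n, c' ≠ l1 → c' ≠ l2 → c' ≠ l3 → l1 ≠ l2 → l1 ≠ l3 →
        l2 ≠ l3 → pr c' l1 ∈ E → pr c' l2 ∈ E → pr c' l3 ∈ E → False := by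
      intro c' l1 l2 l3 a1 a2 a3 a4 a5 a6 b1 b2 b3
      exact hB1 ⟨c', l1, l2, l3, a1, a2, a3, a4, a5, a6, b1, b2, b3⟩
    have hB3' : ∀ u' c' w' p q : Fin n, u' ≠ c' → u' ≠ w' → u' ≠ p → u' ≠ q → c' ≠ w' →
        c' ≠ p → c' ≠ q → w' ≠ p → w' ≠ q → p ≠ q →
        pr u' c' ∈ E → pr c' w' ∈ E → pr p q ∈ E → False := by
      intro u' c' w' p q a1 a2 a3 a4 a5 a6 a7 a8 a9 a10 b1 b2 b3
      exact hB3 ⟨u', c', w', p, q, a1, a2, a3, a4, a5, a6, a7, a8, a9, a10, b1, b2, b3⟩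
    have hmeet : ∀ s t : Fin n, pr s t ∈ E → s ≠ u → s ≠ c → s ≠ w → t ≠ u → t ≠ c → t ≠ w →
        False := by
      intro s t hmem hsu hsc hsw htu htc htw
      exact hB3' u c w s t (Ne.symm hcu') huw (Ne.symm hsu) (Ne.symm htu) hcw'
        (Ne.symm hsc) (Ne.symm htc) (Ne.symm hsw) (Ne.symm htw) (hne' hmem)
        (pr_comm c u ▸ hcu) hcw hmem
    have hcN : ∀ x, pr c x ∈ E → x = u ∨ x = w := by
      intro x hx
      by_contra hcon
      push_neg at hcon
      exact hB1' c u w x hcu' hcw' (hne' hx) huw (Ne.symm hcon.1) (Ne.symm hcon.2) hcu hcw hx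
    by_cases htri : pr u w ∈ E
    · -- triangle : G5
      have huN : ∀ x, pr u x ∈ E → x = c ∨ x = w := by
        intro x hx
        by_contra hcon
        push_neg at hcon
        exact hB1' u c w x (Ne.symm hcu') huw (hne' hx) hcw' (Ne.symm hcon.1)
          (Ne.symm hcon.2) (pr_comm c u ▸ hcu) htri hx
      have hwN : ∀ x, pr w x ∈ E → x = c ∨ x = u := by
        intro x hx
        by_contra hcon
        push_neg at hcon
        exact hB1' w c u x (Ne.symm hcw') (Ne.symm huw) (hne' hx) hcu'
          (Ne.symm hcon.1) (Ne.symm hcon.2) (pr_comm c w ▸ hcw) (pr_comm u w ▸ htri) hx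
      right; right; right; right; left
      refine ⟨u, c, w, Ne.symm hcu', huw, hcw', ?_⟩
      ext e
      simp only [Set.mem_insert_iff, Set.mem_singleton_iff]
      constructor
      · intro he
        obtain ⟨s, t, hst, rfl⟩ := edge_form hunif h0 he
        by_cases hsu : s = u
        · subst hsu
          rcases huN t he with rfl | rfl
          · exact Or.inr (Or.inr rfl)
          · exact Or.inr (Or.inl rfl)
        · by_cases hsc : s = c
          · subst hsc
            rcases hcN t he with rfl | rfl
            · exact Or.inr (Or.inr (pr_comm s t))
            · exact Or.inl rfl
          · by_cases hsw : s = w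
            · subst hsw
              rcases hwN t he with rfl | rfl
              · exact Or.inl (pr_comm s t)
              · exact Or.inr (Or.inl (pr_comm s t))
            · exfalso
              by_cases htu : t = u
              · subst htu
                rcases huN s (pr_comm s t ▸ he) with rfl | rfl
                · exact hsc rfl
                · exact hsw rfl
              · by_cases htc : t = c
                · subst htc
                  rcases hcN s (pr_comm s t ▸ he) with rfl | rfl
                  · exact hsu rfl
                  · exact hsw rfl
                · by_cases htw : t = w
                  · subst htw
                    rcases hwN s (pr_comm s t ▸ he) with rfl | rfl
                    · exact hsc rfl
                    · exact hsu rfl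
                  · exact hmeet s t he hsu hsc hsw htu htc htw
      · rintro (rfl | rfl | rfl)
        · exact hcw
        · exact htri
        · exact pr_comm c u ▸ hcu
    · -- no triangle
      by_cases hx : ∃ x : Fin n, x ≠ u ∧ x ≠ c ∧ x ≠ w ∧ pr u x ∈ E
      · obtain ⟨x, hxu, hxc, hxw, hux⟩ := hx
        have huN : ∀ z, pr u z ∈ E → z = c ∨ z = x := by
          intro z hz
          by_contra hcon
          push_neg at hcon
          exact hB1' u c x z (Ne.symm hcu') (Ne.symm hxu) (hne' hz) (Ne.symm hxc)
            (Ne.symm hcon.1) (Ne.symm hcon.2) (pr_comm c u ▸ hcu) hux hz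
        by_cases hy : ∃ y : Fin n, y ≠ u ∧ y ≠ c ∧ y ≠ w ∧ pr w y ∈ E
        · obtain ⟨y, hyu, hyc, hyw, hwy⟩ := hy
          by_cases hxy : x = y
          · -- four cycle : G6
            subst hxy
            have hwN : ∀ z, pr w z ∈ E → z = c ∨ z = x := by
              intro z hz
              by_contra hcon
              push_neg at hcon
              exact hB1' w c x z (Ne.symm hcw') (Ne.symm hxw) (hne' hz) (Ne.symm hxc)
                (Ne.symm hcon.1) (Ne.symm hcon.2) (pr_comm c w ▸ hcw) hwy hz
            have hxN : ∀ z, pr x z ∈ E → z = u ∨ z = w := by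
              intro z hz
              by_cases h1 : z = u
              · exact Or.inl h1
              · by_cases h2 : z = w
                · exact Or.inr h2
                · exfalso
                  by_cases h3 : z = c
                  · subst h3
                    rcases hcN x (pr_comm x z ▸ hz) with rfl | rfl
                    · exact hxu rfl
                    · exact hxw rfl
                  · exact hmeet x z hz hxu hxc hxw h1 h3 h2
            right; right; right; right; right
            refine ⟨u, c, w, x, Ne.symm hcu', huw, Ne.symm hxu, hcw', Ne.symm hxc,
              Ne.symm hxw, ?_⟩
            ext e
            simp only [Set.mem_insert_iff, Set.mem_singleton_iff]
            constructor
            · intro he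
              obtain ⟨s, t, hst, rfl⟩ := edge_form hunif h0 he
              by_cases hsu : s = u
              · subst hsu
                rcases huN t he with rfl | rfl
                · exact Or.inl rfl
                · exact Or.inr (Or.inr (Or.inr (pr_comm s t)))
              · by_cases hsc : s = c
                · subst hsc
                  rcases hcN t he with rfl | rfl
                  · exact Or.inl (pr_comm s t)
                  · exact Or.inr (Or.inl rfl)
                · by_cases hsw : s = w
                  · subst hsw
                    rcases hwN t he with rfl | rfl
                    · exact Or.inr (Or.inl (pr_comm s t))
                    · exact Or.inr (Or.inr (Or.inl rfl))
                  · by_cases hsx : s = x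
                    · subst hsx
                      rcases hxN t he with rfl | rfl
                      · exact Or.inr (Or.inr (Or.inr rfl))
                      · exact Or.inr (Or.inr (Or.inl (pr_comm s t)))
                    · exfalso
                      by_cases htu : t = u
                      · subst htu
                        rcases huN s (pr_comm s t ▸ he) with rfl | rfl
                        · exact hsc rfl
                        · exact hsx rfl
                      · by_cases htc : t = c
                        · subst htc
                          rcases hcN s (pr_comm s t ▸ he) with rfl | rfl
                          · exact hsu rfl
                          · exact hsw rfl
                        · by_cases htw : t = w
                          · subst htw
                            rcases hwN s (pr_comm s t ▸ he) with rfl | rfl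
                            · exact hsc rfl
                            · exact hsx rfl
                          · by_cases htx : t = x
                            · subst htx
                              rcases hxN s (pr_comm s t ▸ he) with rfl | rfl
                              · exact hsu rfl
                              · exact hsw rfl
                            · exact hmeet s t he hsu hsc hsw htu htc htw
            · rintro (rfl | rfl | rfl | rfl)
              · exact pr_comm c u ▸ hcu
              · exact hcw
              · exact hwy
              · exact pr_comm u x ▸ hux
          · -- P3 + disjoint edge : contradiction
            exfalso
            exact hB3' x u c w y hxu hxc hxw hxy (Ne.symm hcu') huw (Ne.symm hyu) hcw'
              (Ne.symm hyc) (Ne.symm hyw) (pr_comm u x ▸ hux) (pr_comm c u ▸ hcu) hwy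
        · -- P4 : x - u - c - w
          push_neg at hy
          have hwN : ∀ z, pr w z ∈ E → z = c := by
            intro z hz
            by_cases h1 : z = c
            · exact h1
            · exfalso
              by_cases h2 : z = u
              · subst h2
                exact htri (pr_comm w z ▸ hz)
              · have h3 : z ≠ w := Ne.symm (hne' hz)
                exact hy z h2 h1 h3 hz
          have hxN : ∀ z, pr x z ∈ E → z = u := by
            intro z hz
            by_cases h1 : z = u
            · exact h1
            · exfalso
              by_cases h2 : z = c
              · subst h2
                rcases hcN x (pr_comm x z ▸ hz) with rfl | rfl
                · exact hxu rfl
                · exact hxw rfl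
              · by_cases h3 : z = w
                · subst h3
                  have := hwN x (pr_comm x z ▸ hz)
                  exact hxc this
                · exact hmeet x z hz hxu hxc hxw h1 h2 h3
          right; right; right; left
          refine ⟨x, u, c, w, hxu, hxc, hxw, Ne.symm hcu', huw, hcw', ?_⟩
          ext e
          simp only [Set.mem_insert_iff, Set.mem_singleton_iff]
          constructor
          · intro he
            obtain ⟨s, t, hst, rfl⟩ := edge_form hunif h0 he
            by_cases hsu : s = u
            · subst hsu
              rcases huN t he with rfl | rfl
              · exact Or.inr (Or.inl rfl)
              · exact Or.inl (pr_comm s t)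
            · by_cases hsc : s = c
              · subst hsc
                rcases hcN t he with rfl | rfl
                · exact Or.inr (Or.inl (pr_comm s t))
                · exact Or.inr (Or.inr rfl)
              · by_cases hsw : s = w
                · subst hsw
                  have := hwN t he
                  subst this
                  exact Or.inr (Or.inr (pr_comm s t))
                · by_cases hsx : s = x
                  · subst hsx
                    have := hxN t he
                    subst this
                    exact Or.inl rfl
                  · exfalso
                    by_cases htu : t = u
                    · subst htu
                      rcases huN s (pr_comm s t ▸ he) with rfl | rfl
                      · exact hsc rfl
                      · exact hsx rfl
                    · by_cases htc : t = c
                      · subst htc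
                        rcases hcN s (pr_comm s t ▸ he) with rfl | rfl
                        · exact hsu rfl
                        · exact hsw rfl
                      · by_cases htw : t = w
                        · subst htw
                          have := hwN s (pr_comm s t ▸ he)
                          exact hsc this
                        · by_cases htx : t = x
                          · subst htx
                            have := hxN s (pr_comm s t ▸ he)
                            exact hsu this
                          · exact hmeet s t he hsu hsc hsw htu htc htw
          · rintro (rfl | rfl | rfl)
            · exact pr_comm u x ▸ hux
            · exact pr_comm c u ▸ hcu
            · exact hcw
      · push_neg at hx
        have huN : ∀ z, pr u z ∈ E → z = c := by
          intro z hz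
          by_cases h1 : z = c
          · exact h1
          · exfalso
            by_cases h2 : z = w
            · subst h2
              exact htri hz
            · have h3 : z ≠ u := Ne.symm (hne' hz)
              exact hx z h3 h1 h2 hz
        by_cases hy : ∃ y : Fin n, y ≠ u ∧ y ≠ c ∧ y ≠ w ∧ pr w y ∈ E
        · -- P4 : u - c - w - y
          obtain ⟨y, hyu, hyc, hyw, hwy⟩ := hy
          have hwN : ∀ z, pr w z ∈ E → z = c ∨ z = y := by
            intro z hz
            by_contra hcon
            push_neg at hcon
            exact hB1' w c y z (Ne.symm hcw') (Ne.symm hyw) (hne' hz) (Ne.symm hyc)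
              (Ne.symm hcon.1) (Ne.symm hcon.2) (pr_comm c w ▸ hcw) hwy hz
          have hyN : ∀ z, pr y z ∈ E → z = w := by
            intro z hz
            by_cases h1 : z = w
            · exact h1
            · exfalso
              by_cases h2 : z = u
              · subst h2
                have := huN y (pr_comm y z ▸ hz)
                exact hyc this
              · by_cases h3 : z = c
                · subst h3
                  rcases hcN y (pr_comm y z ▸ hz) with rfl | rfl
                  · exact hyu rfl
                  · exact hyw rfl
                · exact hmeet y z hz hyu hyc hyw h2 h3 h1
          right; right; right; left
          refine ⟨u, c, w, y, Ne.symm hcu', huw, Ne.symm hyu, hcw', Ne.symm hyc,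
            Ne.symm hyw, ?_⟩
          ext e
          simp only [Set.mem_insert_iff, Set.mem_singleton_iff]
          constructor
          · intro he
            obtain ⟨s, t, hst, rfl⟩ := edge_form hunif h0 he
            by_cases hsu : s = u
            · subst hsu
              have := huN t he
              subst this
              exact Or.inl rfl
            · by_cases hsc : s = c
              · subst hsc
                rcases hcN t he with rfl | rfl
                · exact Or.inl (pr_comm s t)
                · exact Or.inr (Or.inl rfl)
              · by_cases hsw : s = w
                · subst hsw
                  rcases hwN t he with rfl | rfl
                  · exact Or.inr (Or.inl (pr_comm s t))
                  · exact Or.inr (Or.inr rfl)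
                · by_cases hsy : s = y
                  · subst hsy
                    have := hyN t he
                    subst this
                    exact Or.inr (Or.inr (pr_comm s t))
                  · exfalso
                    by_cases htu : t = u
                    · subst htu
                      have := huN s (pr_comm s t ▸ he)
                      exact hsc this
                    · by_cases htc : t = c
                      · subst htc
                        rcases hcN s (pr_comm s t ▸ he) with rfl | rfl
                        · exact hsu rfl
                        · exact hsw rfl
                      · by_cases htw : t = w
                        · subst htw
                          rcases hwN s (pr_comm s t ▸ he) with rfl | rfl
                          · exact hsc rfl
                          · exact hsy rfl
                        · by_cases hty : t = y
                          · subst hty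
                            have := hyN s (pr_comm s t ▸ he)
                            exact hsw this
                          · exact hmeet s t he hsu hsc hsw htu htc htw
          · rintro (rfl | rfl | rfl)
            · exact pr_comm c u ▸ hcu
            · exact hcw
            · exact hwy
        · -- P3 : G3
          push_neg at hy
          have hwN : ∀ z, pr w z ∈ E → z = c := by
            intro z hz
            by_cases h1 : z = c
            · exact h1
            · exfalso
              by_cases h2 : z = u
              · subst h2
                exact htri (pr_comm w z ▸ hz)
              · have h3 : z ≠ w := Ne.symm (hne' hz)
                exact hy z h2 h1 h3 hz
          right; right; left
          refine ⟨u, c, w, Ne.symm hcu', huw, hcw', ?_⟩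
          ext e
          simp only [Set.mem_insert_iff, Set.mem_singleton_iff]
          constructor
          · intro he
            obtain ⟨s, t, hst, rfl⟩ := edge_form hunif h0 he
            by_cases hsu : s = u
            · subst hsu
              have := huN t he
              subst this
              exact Or.inl rfl
            · by_cases hsc : s = c
              · subst hsc
                rcases hcN t he with rfl | rfl
                · exact Or.inl (pr_comm s t)
                · exact Or.inr rfl
              · by_cases hsw : s = w
                · subst hsw
                  have := hwN t he
                  subst this
                  exact Or.inr (pr_comm s t)
                · exfalso
                  by_cases htu : t = u
                  · subst htu
                    have := huN s (pr_comm s t ▸ he)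
                    exact hsc this
                  · by_cases htc : t = c
                    · subst htc
                      rcases hcN s (pr_comm s t ▸ he) with rfl | rfl
                      · exact hsu rfl
                      · exact hsw rfl
                    · by_cases htw : t = w
                      · subst htw
                        have := hwN s (pr_comm s t ▸ he)
                        exact hsc this
                      · exact hmeet s t he hsu hsc hsw htu htc htw
          · rintro (rfl | rfl)
            · exact pr_comm c u ▸ hcu
            · exact hcw
  · -- no two adjacent edges : E is a matching
    push_neg at hA
    have hdisj : ∀ s t s' t' : Fin n, pr s t ∈ E → pr s' t' ∈ E → pr s t ≠ pr s' t' →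
        s ≠ s' ∧ s ≠ t' ∧ t ≠ s' ∧ t ≠ t' := by
      intro s t s' t' hm1 hm2 hne12
      refine ⟨?_, ?_, ?_, ?_⟩
      · rintro rfl
        have htt : t ≠ t' := by
          rintro rfl
          exact hne12 rfl
        exact hA s t t' htt hm1 hm2
      · rintro rfl
        have htt : t ≠ s' := by
          rintro rfl
          exact hne12 (pr_comm _ _)
        exact hA s t s' htt hm1 (pr_comm s' s ▸ hm2)
      · rintro rfl
        have hss : s ≠ t' := by
          rintro rfl
          exact hne12 (pr_comm _ _)
        exact hA t s t' hss (pr_comm s t ▸ hm1) hm2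
      · rintro rfl
        have hss : s ≠ s' := by
          rintro rfl
          exact hne12 rfl
        exact hA t s s' hss (pr_comm s t ▸ hm1) (pr_comm s' t ▸ hm2)
    obtain ⟨e0, he0⟩ := hne
    obtain ⟨a, b, hab, rfl⟩ := edge_form hunif h0 he0
    by_cases h2 : ∃ f ∈ E, f ≠ pr a b
    · obtain ⟨f, hf, hfne⟩ := h2
      obtain ⟨g, d, hgd, rfl⟩ := edge_form hunif h0 hf
      obtain ⟨hga, hgb, hda, hdb⟩ := hdisj g d a b hf he0 hfne
      by_cases h3 : ∃ g' ∈ E, g' ≠ pr a b ∧ g' ≠ pr g d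
      · -- three pairwise disjoint edges : contradiction with no-B4
        exfalso
        obtain ⟨g', hg', hg'1, hg'2⟩ := h3
        obtain ⟨p, q, hpq, rfl⟩ := edge_form hunif h0 hg'
        obtain ⟨hpa, hpb, hqa, hqb⟩ := hdisj p q a b hg' he0 hg'1
        obtain ⟨hpg, hpd, hqg, hqd⟩ := hdisj p q g d hg' hf hg'2
        apply hB4
        refine ⟨a, g, p, b, d, q, Ne.symm hga, Ne.symm hpa, Ne.symm hpg, hab, hgd, hpq,
          he0, hf, hg', ?_, ?_, ?_⟩
        · intro hmem
          obtain ⟨h1', h2', h3', h4'⟩ := hdisj a g a b hmem he0 (by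
            intro heq
            have := pr_inj heq
            have hgm : g ∈ ({a, b} : Finset (Fin n)) := by
              rw [← this]; simp
            rcases Finset.mem_insert.mp hgm with h | h
            · exact hga h
            · rw [Finset.mem_singleton] at h; exact hgb h)
          exact h1' rfl
        · intro hmem
          obtain ⟨h1', h2', h3', h4'⟩ := hdisj a p a b hmem he0 (by
            intro heq
            have := pr_inj heq
            have hgm : p ∈ ({a, b} : Finset (Fin n)) := by
              rw [← this]; simp
            rcases Finset.mem_insert.mp hgm with h | h
            · exact hpa h
            · rw [Finset.mem_singleton] at h; exact hpb h)
          exact h1' rfl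
        · intro hmem
          obtain ⟨h1', h2', h3', h4'⟩ := hdisj g p g d hmem hf (by
            intro heq
            have := pr_inj heq
            have hgm : p ∈ ({g, d} : Finset (Fin n)) := by
              rw [← this]; simp
            rcases Finset.mem_insert.mp hgm with h | h
            · exact hpg h
            · rw [Finset.mem_singleton] at h; exact hpd h)
          exact h1' rfl
      · -- exactly two edges : G2
        right; left
        refine ⟨a, b, g, d, hab, Ne.symm hga, Ne.symm hda, Ne.symm hgb, Ne.symm hdb, hgd, ?_⟩
        ext e
        constructor
        · intro he
          push_neg at h3
          by_cases h : e = pr a b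
          · exact Or.inl h
          · exact Or.inr (h3 e he h)
        · rintro (rfl | rfl)
          · exact he0
          · exact hf
    · -- exactly one edge : G1
      left
      refine ⟨a, b, hab, ?_⟩
      ext e
      constructor
      · intro he
        push_neg at h2
        exact h2 e he
      · rintro rfl
        exact he0

/-- degenerate case : the empty set is an edge, so the ideal is the unit ideal -/
lemma degenerate_top {E : Set (Finset (Fin n))} (h : (∅ : Finset (Fin n)) ∈ E) (k : ℕ) :
    symbPow (clutterIdeal K E) k = clutterIdeal K E ^ k := by
  have htop : clutterIdeal K E = ⊤ := by
    rw [Ideal.eq_top_iff_one]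
    apply Ideal.subset_span
    exact ⟨∅, h, by simp⟩
  have hmp : (⊤ : Ideal (MvPolynomial (Fin n) K)).minimalPrimes = ∅ := by
    ext p
    simp only [Set.mem_empty_iff_false, iff_false]
    intro hp
    exact hp.1.1.ne_top (top_le_iff.mp hp.1.2)
  rw [htop, symbPow, hmp]
  simp [Ideal.top_pow]

/-- degenerate case : no edges, so the ideal is zero -/
lemma degenerate_bot (k : ℕ) (hk : 1 ≤ k) :
    symbPow (clutterIdeal K (∅ : Set (Finset (Fin n)))) k
      = clutterIdeal K (∅ : Set (Finset (Fin n))) ^ k := by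
  have hbot : clutterIdeal K (∅ : Set (Finset (Fin n))) = ⊥ := by
    rw [clutterIdeal]
    have : {m : MvPolynomial (Fin n) K | ∃ e ∈ (∅ : Set (Finset (Fin n))), m = ∏ i ∈ e, X i}
        = ∅ := by
      ext m; simp
    rw [this, Ideal.span_empty]
  have hbk : (⊥ : Ideal (MvPolynomial (Fin n) K)) ^ k = ⊥ := by
    rw [← Ideal.zero_eq_bot, zero_pow (by omega : k ≠ 0)]
  rw [hbot, hbk]
  apply le_antisymm ?_ bot_le
  have hb : (⊥ : Ideal (MvPolynomial (Fin n) K))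
      ∈ (⊥ : Ideal (MvPolynomial (Fin n) K)).minimalPrimes :=
    ⟨⟨Ideal.bot_prime, le_rfl⟩, fun _ _ _ => bot_le⟩
  calc symbPow (⊥ : Ideal (MvPolynomial (Fin n) K)) k
      ≤ (⊥ : Ideal (MvPolynomial (Fin n) K)) ^ k := iInf₂_le _ hb
  _ = ⊥ := hbk

end Stmt16Aux

/-- If `H` is an `(n-2)`-uniform clutter on `n` vertices with `I(H)^(k₀) = I(H)^{k₀}` for
some `k₀ ≥ 2`, then `I(H)^(k) = I(H)^k` for all `k ≥ 1`. -/
theorem stmt16 {n : ℕ} (K : Type*) [Field K] (E : Set (Finset (Fin n)))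
    (hunif : ∀ e ∈ E, e.card = n - 2)
    (k₀ : ℕ) (hk₀ : 2 ≤ k₀)
    (h : symbPow (clutterIdeal K E) k₀ = clutterIdeal K E ^ k₀) :
    ∀ k : ℕ, 1 ≤ k → symbPow (clutterIdeal K E) k = clutterIdeal K E ^ k := by
  classical
  intro k hk
  open Stmt16Aux in
  by_cases hE0 : (∅ : Finset (Fin n)) ∈ E
  · exact Stmt16Aux.degenerate_top hE0 k
  · by_cases hEe : E = ∅
    · subst hEe
      exact Stmt16Aux.degenerate_bot k hk
    · have hne : E.Nonempty := Set.nonempty_iff_ne_empty.mpr hEe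
      rcases Stmt16Aux.classify hunif hne hE0 with hB | hB | hB | hG | hG | hG | hG | hG | hG
      · exfalso
        obtain ⟨c, l1, l2, l3, a1, a2, a3, a4, a5, a6, b1, b2, b3⟩ := hB
        exact Stmt16Aux.bad_F1 (K := K) hunif c l1 l2 l3 a1 a2 a3 a4 a5 a6 b1 b2 b3 k₀ hk₀ h
      · exfalso
        obtain ⟨u, c, w, p, q, a1, a2, a3, a4, a5, a6, a7, a8, a9, a10, b1, b2, b3⟩ := hB
        exact Stmt16Aux.bad_F3 (K := K) hunif u c w p q a1 a2 a3 a4 a5 a6 a7 a8 a9 a10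
          b1 b2 b3 k₀ hk₀ h
      · exfalso
        obtain ⟨u1, u2, u3, v1, v2, v3, a1, a2, a3, a4, a5, a6, b1, b2, b3, c1, c2, c3⟩ := hB
        exact Stmt16Aux.bad_F4 (K := K) hunif u1 u2 u3 v1 v2 v3 a1 a2 a3 a4 a5 a6
          b1 b2 b3 c1 c2 c3 k₀ hk₀ h
      · obtain ⟨u, v, huv, hE⟩ := hG
        exact Stmt16Aux.good_master E k (Stmt16Aux.good_G1 _ hE k)
      · obtain ⟨a, b, g, d, h1, h2, h3, h4, h5, h6, hE⟩ := hG
        exact Stmt16Aux.good_master E k (Stmt16Aux.good_G2 a b g d h1 h2 h3 h4 h5 h6 hE k)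
      · obtain ⟨u, c, w, h1, h2, h3, hE⟩ := hG
        exact Stmt16Aux.good_master E k (Stmt16Aux.good_G3 u c w h1 h2 h3 hE k)
      · obtain ⟨u, c, w, z, h1, h2, h3, h4, h5, h6, hE⟩ := hG
        exact Stmt16Aux.good_master E k (Stmt16Aux.good_G4 u c w z h1 h2 h3 h4 h5 h6 hE k)
      · obtain ⟨u, v, w, h1, h2, h3, hE⟩ := hG
        exact Stmt16Aux.good_master E k (Stmt16Aux.good_G5 u v w h1 h2 h3 hE k)
      · obtain ⟨u, c, w, z, h1, h2, h3, h4, h5, h6, hE⟩ := hG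
        exact Stmt16Aux.good_master E k (Stmt16Aux.good_G6 u c w z h1 h2 h3 h4 h5 h6 hE k)
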